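/- arXiv:0905.4405 — 11 statements merged into one kernel-verified Lean document; each statement's English description precedes it below -/
import Mathlib

section
/- Let m and n be natural numbers and let A be an m × n matrix with integer entries such that every row of A is either of the form e_i − e_j for some indices i ≠ j, or of the form e_i for some index i, or of the form −e_j for some index j (where e_k denotes the k-th standard unit row vector in ℤ^n). Then A is totally unimodular, i.e., every square submatrix of A has determinant equal to −1, 0, or 1. -/
open Matrix in
/-- Per-row dichotomy: each row of the submatrix either sums to zero, or is a signed
standard unit vector. -/
lemma rows_unit_diff_aux (m n : ℕ) (A : Matrix (Fin m) (Fin n) ℤ)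
    (hA : ∀ a : Fin m,
      (∃ i j : Fin n, i ≠ j ∧ A a = Pi.single i 1 - Pi.single j 1) ∨
      (∃ i : Fin n, A a = Pi.single i 1) ∨
      (∃ j : Fin n, A a = -Pi.single j 1))
    (k : ℕ) (f : Fin k → Fin m) (g : Fin k → Fin n) (hg : Function.Injective g) (r : Fin k) :
    (∑ c, (A.submatrix f g) r c = 0) ∨
    ∃ c : Fin k, ∃ s : ℤ, (s = 1 ∨ s = -1) ∧ (A.submatrix f g) r = Pi.single c s := by
  have sum_single : ∀ (i : Fin n), (∃ c0, g c0 = i) →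
      ∑ c, (Pi.single i (1:ℤ) : Fin n → ℤ) (g c) = 1 := by
    rintro i ⟨c0, rfl⟩
    rw [Fintype.sum_eq_single c0 (fun b hb => Pi.single_eq_of_ne (hg.ne hb) 1)]
    exact Pi.single_eq_same _ _
  have sum_single0 : ∀ (i : Fin n), (¬ ∃ c0, g c0 = i) →
      ∑ c, (Pi.single i (1:ℤ) : Fin n → ℤ) (g c) = 0 := by
    intro i hi
    refine Finset.sum_eq_zero fun c _ => Pi.single_eq_of_ne (fun h => hi ⟨c, h⟩) 1
  rcases hA (f r) with ⟨i, j, hij, hr⟩ | ⟨i, hr⟩ | ⟨j, hr⟩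
  · by_cases hi : ∃ c0, g c0 = i <;> by_cases hj : ∃ c1, g c1 = j
    · left
      simp only [Matrix.submatrix_apply, hr, Pi.sub_apply, Finset.sum_sub_distrib,
        sum_single i hi, sum_single j hj, sub_self]
    · obtain ⟨c0, rfl⟩ := hi
      right
      refine ⟨c0, 1, Or.inl rfl, funext fun c => ?_⟩
      by_cases hc : c = c0
      · subst hc
        simp [Matrix.submatrix_apply, hr, Pi.single_eq_of_ne hij]
      · have h1 : g c ≠ g c0 := hg.ne hc
        have h2 : g c ≠ j := fun h => hj ⟨c, h⟩
        simp only [Matrix.submatrix_apply, hr, Pi.sub_apply, Pi.single_eq_of_ne h1,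
          Pi.single_eq_of_ne h2, sub_zero, Pi.single_eq_of_ne hc]
    · obtain ⟨c1, rfl⟩ := hj
      right
      refine ⟨c1, -1, Or.inr rfl, funext fun c => ?_⟩
      by_cases hc : c = c1
      · subst hc
        simp [Matrix.submatrix_apply, hr, Pi.single_eq_of_ne hij.symm]
      · have h1 : g c ≠ g c1 := hg.ne hc
        have h2 : g c ≠ i := fun h => hi ⟨c, h⟩
        simp only [Matrix.submatrix_apply, hr, Pi.sub_apply, Pi.single_eq_of_ne h1,
          Pi.single_eq_of_ne h2, sub_zero, Pi.single_eq_of_ne hc, sub_self]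
    · left
      simp only [Matrix.submatrix_apply, hr, Pi.sub_apply, Finset.sum_sub_distrib,
        sum_single0 i hi, sum_single0 j hj, sub_self]
  · by_cases hi : ∃ c0, g c0 = i
    · obtain ⟨c0, rfl⟩ := hi
      right
      refine ⟨c0, 1, Or.inl rfl, funext fun c => ?_⟩
      by_cases hc : c = c0
      · subst hc; simp [Matrix.submatrix_apply, hr]
      · simp [Matrix.submatrix_apply, hr, Pi.single_eq_of_ne (hg.ne hc), Pi.single_eq_of_ne hc]
    · left
      simpa only [Matrix.submatrix_apply, hr] using sum_single0 i hi
  · by_cases hj : ∃ c0, g c0 = j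
    · obtain ⟨c0, rfl⟩ := hj
      right
      refine ⟨c0, -1, Or.inr rfl, funext fun c => ?_⟩
      by_cases hc : c = c0
      · subst hc; simp [Matrix.submatrix_apply, hr]
      · simp [Matrix.submatrix_apply, hr, Pi.single_eq_of_ne (hg.ne hc), Pi.single_eq_of_ne hc]
    · left
      simp only [Matrix.submatrix_apply, hr, Pi.neg_apply, Finset.sum_neg_distrib]
      rw [sum_single0 j hj]  -- may need adjusting
      ring

/-- If every row of an integer matrix `A` is of the form `eᵢ - eⱼ` (`i ≠ j`),
`eᵢ`, or `-eⱼ` (where `eₖ` is a standard unit row vector), then `A` is totally unimodular: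
every square submatrix has determinant `-1`, `0`, or `1`. -/
theorem rows_unit_diff_totallyUnimodular (m n : ℕ) (A : Matrix (Fin m) (Fin n) ℤ)
    (hA : ∀ a : Fin m,
      (∃ i j : Fin n, i ≠ j ∧ A a = Pi.single i 1 - Pi.single j 1) ∨
      (∃ i : Fin n, A a = Pi.single i 1) ∨
      (∃ j : Fin n, A a = -Pi.single j 1)) :
    ∀ (k : ℕ) (f : Fin k → Fin m) (g : Fin k → Fin n),
      Function.Injective f → Function.Injective g →
      (A.submatrix f g).det = -1 ∨ (A.submatrix f g).det = 0 ∨ (A.submatrix f g).det = 1 := by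
  intro k
  induction k with
  | zero => intro f g _ _; right; right; simp
  | succ k ih =>
    intro f g hf hg
    by_cases hz : ∀ r, ∑ c, A.submatrix f g r c = 0
    · right; left
      rw [← Matrix.exists_mulVec_eq_zero_iff]
      refine ⟨fun _ => 1, ?_, ?_⟩
      · intro h
        have := congrFun h 0
        simp at this
      · funext r
        simpa [Matrix.mulVec, dotProduct] using hz r
    · push_neg at hz
      obtain ⟨r, hr⟩ := hz
      rcases rows_unit_diff_aux m n A hA (k+1) f g hg r with h | ⟨c, s, hs, hMr⟩
      · exact absurd h hr
      · have hdet : (A.submatrix f g).det = (-1:ℤ)^((r:ℕ)+(c:ℕ)) * s *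
            (A.submatrix (f ∘ r.succAbove) (g ∘ c.succAbove)).det := by
          rw [Matrix.det_succ_row (A.submatrix f g) r,
            Fintype.sum_eq_single c (fun b hb => by
              rw [show A.submatrix f g r b = 0 from by rw [congrFun hMr b]; simp [Pi.single_eq_of_ne hb]]; ring)]
          rw [show A.submatrix f g r c = s from by rw [congrFun hMr c]; simp,
            Matrix.submatrix_submatrix]
        have hminor := ih (f ∘ r.succAbove) (g ∘ c.succAbove)
          (hf.comp Fin.succAbove_right_injective)
          (hg.comp Fin.succAbove_right_injective)
        rcases neg_one_pow_eq_or ℤ ((r:ℕ)+(c:ℕ)) with hp | hp <;>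
          rcases hs with rfl | rfl <;> rcases hminor with h | h | h <;>
          simp [hdet, hp, h]
end

section
/- Define c : ℕ → ℤ recursively by c_0 = 1 and, for n ≥ 1, c_n = Σ_{j=1}^{n} (−1)^{j+1} · binom(n+1, j+1) · (n!/(n−j+1)!) · c_{n−j}. Then in the ring of formal power series ℚ⟦X⟧, one has (Σ_{n≥0} ((−1)^n / (n+1)!) X^n) · (Σ_{n≥0} (c_n / (n! · (n+1)!)) X^n) = 1. In other words, the Taylor coefficients b_n of the function h(x) = x/(1−e^{−x}) about x = 0 are b_n = c_n / (n! · (n+1)!), with the integers c_n given by the stated recursion. -/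
/-- With `c : ℕ → ℤ` defined by `c 0 = 1` and the stated recursion,
the formal power series `∑ ((-1)^n/(n+1)!) Xⁿ` and `∑ (cₙ/(n!·(n+1)!)) Xⁿ` in `ℚ⟦X⟧`
are mutually inverse; i.e. the Taylor coefficients of `x/(1 - e^{-x})` are `cₙ/(n!(n+1)!)`. -/
theorem powerSeries_inverse_toddy (c : ℕ → ℤ) (hc0 : c 0 = 1)
    (hcrec : ∀ n : ℕ, 1 ≤ n →
      c n = ∑ j ∈ Finset.Icc 1 n,
        (-1 : ℤ) ^ (j + 1) * ((n + 1).choose (j + 1) : ℤ) *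
          ((n.factorial / (n - j + 1).factorial : ℕ) : ℤ) * c (n - j)) :
    (PowerSeries.mk fun n => ((-1 : ℚ) ^ n / ((n + 1).factorial : ℚ))) *
      (PowerSeries.mk fun n => (c n : ℚ) / ((n.factorial : ℚ) * ((n + 1).factorial : ℚ)))
      = 1 := by
  ext n
  rw [PowerSeries.coeff_mul, Finset.Nat.sum_antidiagonal_eq_sum_range_succ_mk]
  simp only [PowerSeries.coeff_mk]
  cases n with
  | zero => simp [hc0]
  | succ m =>
    have hone : (PowerSeries.coeff (R := ℚ) (m+1)) 1 = 0 := by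
      simp [PowerSeries.coeff_one]
    rw [hone, Finset.sum_range_succ']
    have hrec := hcrec (m+1) (Nat.le_add_left 1 m)
    rw [show Finset.Icc 1 (m+1) = Finset.Ico 1 (m+2) by rfl,
      Finset.sum_Ico_eq_sum_range] at hrec
    simp only [show m + 2 - 1 = m + 1 from rfl] at hrec
    have key : ∀ i ∈ Finset.range (m+1),
        (-1:ℚ) ^ (i+1) / ((i+1+1).factorial : ℚ) *
          ((c (m+1-(i+1)) : ℚ) / (((m+1-(i+1)).factorial : ℚ) * (((m+1-(i+1))+1).factorial : ℚ)))
        = -(((-1:ℚ) ^ ((1+i)+1) * (((m+1+1).choose ((1+i)+1) : ℕ) : ℚ) *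
            (((m+1).factorial / ((m+1)-(1+i)+1).factorial : ℕ) : ℚ) * (c ((m+1)-(1+i)) : ℚ))
            / (((m+1).factorial : ℚ) * ((m+2).factorial : ℚ))) := by
      intro i hi
      have him : i ≤ m := Nat.lt_succ_iff.mp (Finset.mem_range.mp hi)
      have h1 : m + 1 - (i+1) = m - i := by omega
      have h2 : m + 1 - (1+i) = m - i := by omega
      rw [h1, h2]
      have hch : ((m+2).choose (i+2) : ℚ) * ((i+2).factorial : ℚ) * ((m-i).factorial : ℚ)
          = ((m+2).factorial : ℚ) := by
        have := Nat.choose_mul_factorial_mul_factorial (by omega : i+2 ≤ m+2)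
        have h4 : m + 2 - (i+2) = m - i := by omega
        rw [h4] at this
        exact_mod_cast congrArg (fun x : ℕ => (x : ℚ)) this
      have hdvd : (m - i + 1).factorial ∣ (m+1).factorial :=
        Nat.factorial_dvd_factorial (by omega)
      have hdiv : (((m+1).factorial / (m - i + 1).factorial : ℕ) : ℚ)
          = ((m+1).factorial : ℚ) / ((m - i + 1).factorial : ℚ) :=
        Nat.cast_div hdvd (by positivity)
      have hii : (1+i)+1 = i + 2 := by omega
      have hmm : (m+1)+1 = m + 2 := by omega
      rw [hdiv, hii, hmm, show i+1+1 = i+2 by omega]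
      have e1 : ((i+2).factorial : ℚ) ≠ 0 := by positivity
      have e2 : ((m-i).factorial : ℚ) ≠ 0 := by positivity
      have e3 : ((m-i+1).factorial : ℚ) ≠ 0 := by positivity
      have e4 : ((m+1).factorial : ℚ) ≠ 0 := by positivity
      have e5 : ((m+2).factorial : ℚ) ≠ 0 := by positivity
      have hsign : (-1:ℚ) ^ (i+2) = -(-1:ℚ)^(i+1) := by ring
      rw [hsign]
      field_simp
      linear_combination (-(c (m-i) : ℚ)) * hch
    rw [Finset.sum_congr rfl key, Finset.sum_neg_distrib, ← Finset.sum_div]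
    have hS := congrArg (fun z : ℤ => (z:ℚ)) hrec
    simp only [Int.cast_sum, Int.cast_mul, Int.cast_pow, Int.cast_neg, Int.cast_one,
      Int.cast_natCast] at hS
    rw [← hS]
    simp [Nat.factorial]
end

section
/- Define c : ℕ → ℤ recursively by c_0 = 1 and, for n ≥ 1, c_n = Σ_{j=1}^{n} (−1)^{j+1} · binom(n+1, j+1) · (n!/(n−j+1)!) · c_{n−j}. Then for every n ≥ 0, |c_n| ≤ ((n+1)!)^{2n}. -/
lemma sum_choose_aux (n : ℕ) :
    ∑ j ∈ Finset.Icc 1 n, (n + 1).choose (j + 1) ≤ 2 ^ (n + 1) := by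
  have h1 : ∑ j ∈ Finset.Icc 1 n, (n + 1).choose (j + 1)
      = ∑ k ∈ Finset.Icc 2 (n + 1), (n + 1).choose k := by
    rw [← Finset.map_add_right_Icc 1 n 1, Finset.sum_map]
    rfl
  rw [h1]
  calc ∑ k ∈ Finset.Icc 2 (n + 1), (n + 1).choose k
      ≤ ∑ k ∈ Finset.range (n + 2), (n + 1).choose k := by
        apply Finset.sum_le_sum_of_subset
        intro k hk
        simp only [Finset.mem_Icc] at hk
        simp only [Finset.mem_range]
        omega
    _ = 2 ^ (n + 1) := Nat.sum_range_choose (n + 1)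

lemma two_pow_aux : ∀ n : ℕ, 1 ≤ n → 2 ^ (n + 1) ≤ (n + 1) ^ 2 * n.factorial := by
  intro n
  induction n with
  | zero => omega
  | succ m ih =>
    intro _
    rcases Nat.eq_zero_or_pos m with h | h
    · subst h; decide
    · have hm : 1 ≤ m := h
      have := ih hm
      rw [Nat.factorial_succ]
      calc 2 ^ (m + 2) = 2 * 2 ^ (m + 1) := by ring
        _ ≤ 2 * ((m + 1) ^ 2 * m.factorial) := by
            exact Nat.mul_le_mul_left 2 this
        _ = (2 * (m + 1)) * ((m + 1) * m.factorial) := by ring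
        _ ≤ (m + 2) ^ 2 * ((m + 1) * m.factorial) :=
            Nat.mul_le_mul_right _ (by nlinarith)

/-- With `c : ℕ → ℤ` defined by `c 0 = 1` and the stated recursion,
`|cₙ| ≤ ((n+1)!)^(2n)` for every `n`. -/
theorem c_abs_le (c : ℕ → ℤ) (hc0 : c 0 = 1)
    (hcrec : ∀ n : ℕ, 1 ≤ n →
      c n = ∑ j ∈ Finset.Icc 1 n,
        (-1 : ℤ) ^ (j + 1) * ((n + 1).choose (j + 1) : ℤ) *
          ((n.factorial / (n - j + 1).factorial : ℕ) : ℤ) * c (n - j)) :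
    ∀ n : ℕ, |c n| ≤ (((n + 1).factorial : ℤ)) ^ (2 * n) := by
  intro n
  induction n using Nat.strong_induction_on with
  | _ n ih =>
    match n with
    | 0 => simp [hc0]
    | Nat.succ m =>
      set n := m + 1 with hn
      have hn1 : 1 ≤ n := by omega
      rw [hcrec n hn1]
      -- the uniform constant
      set C : ℤ := ((n.factorial : ℤ)) * (((n + 1).factorial : ℤ)) ^ (2 * m) with hC
      have hfpos : (1 : ℤ) ≤ ((n + 1).factorial : ℤ) := by
        exact_mod_cast Nat.one_le_iff_ne_zero.mpr (n + 1).factorial_ne_zero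
      have hCpos : 0 ≤ C := by positivity
      have hterm : ∀ j ∈ Finset.Icc 1 n,
          |(-1 : ℤ) ^ (j + 1) * ((n + 1).choose (j + 1) : ℤ) *
            ((n.factorial / (n - j + 1).factorial : ℕ) : ℤ) * c (n - j)|
          ≤ ((n + 1).choose (j + 1) : ℤ) * C := by
        intro j hj
        simp only [Finset.mem_Icc] at hj
        rw [abs_mul, abs_mul, abs_mul, abs_pow, abs_neg, abs_one, one_pow, one_mul]
        have h1 : |(((n + 1).choose (j + 1) : ℕ) : ℤ)| = ((n + 1).choose (j + 1) : ℤ) := by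
          simp
        have h2 : |((n.factorial / (n - j + 1).factorial : ℕ) : ℤ)| ≤ (n.factorial : ℤ) := by
          rw [abs_of_nonneg (by positivity)]
          exact_mod_cast Nat.div_le_self _ _
        have h3 : |c (n - j)| ≤ (((n + 1).factorial : ℤ)) ^ (2 * m) := by
          have hlt : n - j < n := by omega
          calc |c (n - j)| ≤ ((((n - j) + 1).factorial : ℤ)) ^ (2 * (n - j)) := ih _ hlt
            _ ≤ (((n + 1).factorial : ℤ)) ^ (2 * (n - j)) := by
                apply pow_le_pow_left₀ (by positivity)
                exact_mod_cast Nat.factorial_le (by omega)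
            _ ≤ (((n + 1).factorial : ℤ)) ^ (2 * m) := by
                apply pow_le_pow_right₀ hfpos
                omega
        rw [h1, hC]
        calc ((n + 1).choose (j + 1) : ℤ) * |((n.factorial / (n - j + 1).factorial : ℕ) : ℤ)|
              * |c (n - j)|
            ≤ ((n + 1).choose (j + 1) : ℤ) * (n.factorial : ℤ)
              * ((((n + 1).factorial : ℤ)) ^ (2 * m)) := by
              apply mul_le_mul
              · apply mul_le_mul_of_nonneg_left h2 (by positivity)
              · exact h3
              · exact abs_nonneg _
              · positivity
          _ = ((n + 1).choose (j + 1) : ℤ) *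
              ((n.factorial : ℤ) * (((n + 1).factorial : ℤ)) ^ (2 * m)) := by ring
      calc |∑ j ∈ Finset.Icc 1 n,
            (-1 : ℤ) ^ (j + 1) * ((n + 1).choose (j + 1) : ℤ) *
              ((n.factorial / (n - j + 1).factorial : ℕ) : ℤ) * c (n - j)|
          ≤ ∑ j ∈ Finset.Icc 1 n,
            |(-1 : ℤ) ^ (j + 1) * ((n + 1).choose (j + 1) : ℤ) *
              ((n.factorial / (n - j + 1).factorial : ℕ) : ℤ) * c (n - j)| :=
            Finset.abs_sum_le_sum_abs _ _
        _ ≤ ∑ j ∈ Finset.Icc 1 n, ((n + 1).choose (j + 1) : ℤ) * C :=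
            Finset.sum_le_sum hterm
        _ = ((∑ j ∈ Finset.Icc 1 n, (n + 1).choose (j + 1) : ℕ) : ℤ) * C := by
            rw [← Finset.sum_mul]
            push_cast
            ring
        _ ≤ ((2 ^ (n + 1) : ℕ) : ℤ) * C := by
            apply mul_le_mul_of_nonneg_right _ hCpos
            exact_mod_cast sum_choose_aux n
        _ ≤ (((n + 1) ^ 2 * n.factorial : ℕ) : ℤ) * C := by
            apply mul_le_mul_of_nonneg_right _ hCpos
            exact_mod_cast two_pow_aux n hn1
        _ = (((n + 1).factorial : ℤ)) ^ (2 * n) := by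
            have hfact : ((n + 1).factorial : ℤ) = ((n : ℤ) + 1) * (n.factorial : ℤ) := by
              exact_mod_cast Nat.factorial_succ n
            have h2n : 2 * n = 2 + 2 * m := by omega
            rw [hC, h2n, pow_add, hfact]
            push_cast
            ring
end

section
/- For all positive integers n and r, the vector of Katzman coefficients (A_0^{n,r}, A_1^{n,r}, …, A_{n(r−1)}^{n,r}) is unimodal: there exists an index p with 0 ≤ p ≤ n(r−1) such that A_i^{n,r} ≤ A_j^{n,r} whenever 0 ≤ i ≤ j ≤ p, and A_i^{n,r} ≥ A_j^{n,r} whenever p ≤ i ≤ j ≤ n(r−1). -/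
open Polynomial Finset

/-- The Katzman coefficient `A_i^{n,r}`: the coefficient of `T^i` in `(1 + T + ⋯ + T^(r-1))^n`. -/
noncomputable def katz (n r i : ℕ) : ℕ :=
  ((∑ j ∈ Finset.range r, (Polynomial.X : Polynomial ℕ) ^ j) ^ n).coeff i

/-- Integer-indexed extension of the Katzman coefficients by zero. -/
noncomputable def katzF (n r : ℕ) (z : ℤ) : ℕ :=
  if 0 ≤ z then katz n r z.toNat else 0

lemma katzF_neg (n r : ℕ) {z : ℤ} (hz : z < 0) : katzF n r z = 0 := by
  simp [katzF, not_le.2 hz]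

lemma katzF_natCast (n r i : ℕ) : katzF n r (i : ℤ) = katz n r i := by
  simp [katzF]

lemma katz_succ (n r i : ℕ) :
    katz (n+1) r i = ∑ j ∈ range r, if j ≤ i then katz n r (i - j) else 0 := by
  simp only [katz, pow_succ, Finset.mul_sum, finset_sum_coeff, coeff_mul_X_pow']

lemma katzF_succ (n r : ℕ) (z : ℤ) :
    katzF (n+1) r z = ∑ j ∈ range r, katzF n r (z - j) := by
  by_cases hz : 0 ≤ z
  · rw [katzF, if_pos hz, katz_succ]
    refine Finset.sum_congr rfl fun j hj => ?_
    rcases le_or_gt (j : ℤ) z with h | h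
    · rw [if_pos (by omega), katzF, if_pos (by omega)]
      congr 1
      omega
    · rw [if_neg (by omega), katzF_neg _ _ (by omega)]
  · rw [katzF_neg _ _ (by omega)]
    exact (Finset.sum_eq_zero fun j _ => katzF_neg _ _ (by omega)).symm

lemma mono_of_step {M : ℤ} {h : ℤ → ℕ}
    (H : ∀ z : ℤ, 2*(z+1) ≤ M → h z ≤ h (z+1)) :
    ∀ x y : ℤ, x ≤ y → 2*y ≤ M → h x ≤ h y := by
  intro x y hxy hy
  obtain ⟨d, rfl⟩ := Int.le.dest hxy
  clear hxy
  induction d with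
  | zero => simp
  | succ d ih =>
      have hcast : (((d : ℕ) + 1 : ℕ) : ℤ) = (d : ℤ) + 1 := by push_cast; ring
      rw [hcast] at hy ⊢
      have h1 : h x ≤ h (x + d) := ih (by omega)
      have h2 : h (x + d) ≤ h (x + d + 1) := H _ (by omega)
      have hadd : x + ((d : ℤ) + 1) = x + d + 1 := by ring
      rw [hadd]
      exact le_trans h1 h2

lemma katz_key (r : ℕ) (hr : 1 ≤ r) (n : ℕ) :
    (∀ z : ℤ, katzF n r z = katzF n r ((n * (r-1) : ℕ) - z)) ∧
    (∀ x y : ℤ, x ≤ y → 2*y ≤ ((n * (r-1) : ℕ) : ℤ) → katzF n r x ≤ katzF n r y) := by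
  induction n with
  | zero =>
      have h0 : ∀ z : ℤ, katzF 0 r z = if z = 0 then 1 else 0 := by
        intro z
        unfold katzF katz
        simp only [pow_zero, Polynomial.coeff_one]
        split_ifs <;> omega
      constructor
      · intro z
        rw [h0, h0]
        have : ((0 * (r-1) : ℕ) : ℤ) = 0 := by simp
        rw [this]
        split_ifs <;> omega
      · intro x y hxy hy
        rw [h0, h0]
        have : ((0 * (r-1) : ℕ) : ℤ) = 0 := by simp
        rw [this] at hy
        split_ifs <;> omega
  | succ n ih =>
      obtain ⟨hsym, hmono⟩ := ih
      have hmul : (n+1) * (r-1) = n * (r-1) + (r-1) := by ring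
      -- Symmetry for n+1
      have hsym' : ∀ z : ℤ, katzF (n+1) r z = katzF (n+1) r (((n+1) * (r-1) : ℕ) - z) := by
        intro z
        rw [katzF_succ, katzF_succ]
        calc ∑ k ∈ range r, katzF n r (z - k)
            = ∑ k ∈ range r, katzF n r (z - ((r - 1 - k : ℕ) : ℤ)) :=
              (Finset.sum_range_reflect (fun k => katzF n r (z - k)) r).symm
          _ = ∑ k ∈ range r, katzF n r ((((n+1) * (r-1) : ℕ) : ℤ) - z - k) := by
              refine Finset.sum_congr rfl fun k hk => ?_
              have hk' : k < r := Finset.mem_range.mp hk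
              rw [hsym (z - ((r - 1 - k : ℕ) : ℤ))]
              congr 1
              rw [hmul]
              push_cast
              omega
      -- Step monotonicity for n+1
      have hstep : ∀ z : ℤ, 2*(z+1) ≤ (((n+1) * (r-1) : ℕ) : ℤ) →
          katzF (n+1) r z ≤ katzF (n+1) r (z+1) := by
        intro z hz
        rw [katzF_succ, katzF_succ]
        obtain ⟨r', rfl⟩ : ∃ r', r = r' + 1 := ⟨r - 1, by omega⟩
        rw [Finset.sum_range_succ, Finset.sum_range_succ']
        have heq : ∀ k ∈ range r', katzF n (r'+1) (z + 1 - ((k+1 : ℕ) : ℤ)) =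
            katzF n (r'+1) (z - k) := by
          intro k _
          congr 1
          push_cast
          ring
        rw [Finset.sum_congr rfl heq]
        have h0 : katzF n (r'+1) (z + 1 - ((0 : ℕ) : ℤ)) = katzF n (r'+1) (z+1) := by
          norm_num
        rw [h0]
        refine Nat.add_le_add_left ?_ _
        -- need : katzF n (r'+1) (z - r') ≤ katzF n (r'+1) (z+1)
        simp only [Nat.add_sub_cancel] at hsym hmono hz
        have hz' : ((n+1) * r' : ℕ) = n * r' + r' := by ring
        rw [hz', Nat.cast_add] at hz
        rcases le_or_gt (2*(z+1)) ((n * r' : ℕ) : ℤ) with h | h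
        · exact hmono _ _ (by omega) h
        · rw [hsym (z+1)]
          exact hmono _ _ (by omega) (by omega)
      exact ⟨hsym', mono_of_step hstep⟩

/-- The vector `(A_0^{n,r}, …, A_{n(r-1)}^{n,r})` of Katzman coefficients
is unimodal. -/
theorem katz_unimodal (n r : ℕ) (hn : 1 ≤ n) (hr : 1 ≤ r) :
    ∃ p : ℕ, p ≤ n * (r - 1) ∧
      (∀ i j : ℕ, i ≤ j → j ≤ p → katz n r i ≤ katz n r j) ∧
      (∀ i j : ℕ, p ≤ i → i ≤ j → j ≤ n * (r - 1) → katz n r j ≤ katz n r i) := by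
  obtain ⟨hsym, hmono⟩ := katz_key r hr n
  refine ⟨(n * (r-1) + 1) / 2, by omega, ?_, ?_⟩
  · intro i j hij hjp
    rw [← katzF_natCast n r i, ← katzF_natCast n r j]
    rcases le_or_gt (2*(j:ℤ)) ((n * (r-1) : ℕ) : ℤ) with h | h
    · exact hmono _ _ (by omega) h
    · rcases eq_or_lt_of_le hij with rfl | hlt
      · exact le_refl _
      · rw [hsym (j : ℤ)]
        exact hmono _ _ (by omega) (by omega)
  · intro i j hpi hij hjM
    rw [← katzF_natCast n r i, ← katzF_natCast n r j]
    rw [hsym (i : ℤ), hsym (j : ℤ)]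
    exact hmono _ _ (by omega) (by omega)
end

section
/- For every fixed natural number g, there exists a polynomial P ∈ ℚ[X] of degree exactly g with positive leading coefficient such that A_g^{n,3} = P(n) for every integer n ≥ g. That is, for fixed g, the rank-three Katzman coefficient A_g^{n,3} is a polynomial of degree g in the variable n with positive leading coefficient. -/
open Polynomial Finset

lemma katz_three_sum (n g : ℕ) (hng : g ≤ n) :
    katz n 3 g = ∑ k ∈ range (g/2+1), n.choose k * (n-k).choose (g-2*k) := by
  have h3 : (∑ j ∈ Finset.range 3, (Polynomial.X : Polynomial ℕ) ^ j)
      = X^2 + (1 + X) := by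
    rw [Finset.sum_range_succ, Finset.sum_range_succ, Finset.sum_range_one]
    ring
  have hterm : ∀ k, ((X^2)^k * (1+X:ℕ[X])^(n-k) * (n.choose k : ℕ[X])).coeff g
      = if 2*k ≤ g then n.choose k * (n-k).choose (g-2*k) else 0 := by
    intro k
    have : (X^2:ℕ[X])^k * (1+X)^(n-k) * (n.choose k : ℕ[X])
        = (C (n.choose k) * (1+X)^(n-k)) * X^(2*k) := by
      rw [← C_eq_natCast, pow_mul]; push_cast; ring
    rw [this, coeff_mul_X_pow', coeff_C_mul, coeff_one_add_X_pow]
    split <;> simp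
  unfold katz
  rw [h3, add_pow, finset_sum_coeff]
  simp only [hterm]
  rw [← Finset.sum_subset (Finset.range_subset_range.2 (by omega : g/2+1 ≤ n+1))
      (fun x _ hx => by rw [if_neg]; simp only [Finset.mem_range, not_lt] at hx; omega)]
  exact Finset.sum_congr rfl fun k hk => by
    rw [if_pos]; simp only [Finset.mem_range] at hk; omega

noncomputable def katzPoly (g : ℕ) : Polynomial ℚ :=
  ∑ k ∈ range (g/2+1),
    (((k.factorial * (g-2*k).factorial : ℕ) : ℚ))⁻¹ •
      (descPochhammer ℚ k * (descPochhammer ℚ (g-2*k)).comp (X - C (k:ℚ)))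

lemma katzPoly_term_monic (g k : ℕ) :
    (descPochhammer ℚ k * (descPochhammer ℚ (g-2*k)).comp (X - C (k:ℚ))).Monic :=
  (monic_descPochhammer ℚ k).mul
    (((monic_descPochhammer ℚ (g-2*k)).comp (monic_X_sub_C _)
      (by rw [natDegree_X_sub_C]; exact one_ne_zero)))

lemma katzPoly_term_natDegree (g k : ℕ) :
    (descPochhammer ℚ k * (descPochhammer ℚ (g-2*k)).comp (X - C (k:ℚ))).natDegree
      = k + (g - 2*k) := by
  have h2 : ((descPochhammer ℚ (g-2*k)).comp (X - C (k:ℚ))) ≠ 0 :=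
    ((monic_descPochhammer ℚ (g-2*k)).comp (monic_X_sub_C _)
      (by rw [natDegree_X_sub_C]; exact one_ne_zero)).ne_zero
  rw [natDegree_mul (monic_descPochhammer ℚ k).ne_zero h2, descPochhammer_natDegree,
    natDegree_comp, descPochhammer_natDegree, natDegree_X_sub_C, mul_one]

lemma katzPoly_coeff_g (g : ℕ) : (katzPoly g).coeff g = ((g.factorial : ℚ))⁻¹ := by
  unfold katzPoly
  rw [finset_sum_coeff, Finset.sum_eq_single 0]
  · have hd := katzPoly_term_natDegree g 0
    rw [show 0 + (g - 2*0) = g by omega] at hd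
    have h1 := (katzPoly_term_monic g 0).coeff_natDegree
    rw [hd] at h1
    rw [coeff_smul, h1, smul_eq_mul, mul_one]
    norm_num
  · intro k hk hk0
    rw [coeff_smul, coeff_eq_zero_of_natDegree_lt, smul_zero]
    rw [katzPoly_term_natDegree g k]
    simp only [Finset.mem_range] at hk
    omega
  · intro h
    exact absurd (Finset.mem_range.2 (Nat.succ_pos _)) h

lemma katzPoly_degree_le (g : ℕ) : (katzPoly g).degree ≤ (g : ℕ) := by
  refine (degree_sum_le _ _).trans ?_
  apply Finset.sup_le
  intro k hk
  refine (degree_smul_le _ _).trans ?_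
  refine (degree_le_natDegree).trans ?_
  rw [katzPoly_term_natDegree g k]
  simp only [Finset.mem_range] at hk
  have : k + (g - 2*k) ≤ g := by omega
  exact_mod_cast this

/-- For fixed `g`, the rank-three Katzman coefficient `A_g^{n,3}` is a
polynomial of degree exactly `g` in `n`, with positive leading coefficient, for all `n ≥ g`. -/
theorem katz_three_polynomial_in_n (g : ℕ) :
    ∃ P : Polynomial ℚ, P.degree = g ∧ 0 < P.leadingCoeff ∧
      ∀ n : ℕ, g ≤ n → (katz n 3 g : ℚ) = P.eval (n : ℚ) := by
  refine ⟨katzPoly g, ?_, ?_, ?_⟩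
  case refine_1 =>
    exact degree_eq_of_le_of_coeff_ne_zero (katzPoly_degree_le g)
      (by rw [katzPoly_coeff_g]; positivity)
  case refine_2 =>
    have hdeg : (katzPoly g).degree = (g : ℕ) :=
      degree_eq_of_le_of_coeff_ne_zero (katzPoly_degree_le g)
        (by rw [katzPoly_coeff_g]; positivity)
    rw [leadingCoeff, natDegree_eq_of_degree_eq_some hdeg, katzPoly_coeff_g]
    positivity
  case refine_3 =>
    intro n hn
    rw [katz_three_sum n g hn, Nat.cast_sum]
    unfold katzPoly
    rw [eval_finset_sum]
    refine Finset.sum_congr rfl fun k hk => ?_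
    simp only [Finset.mem_range] at hk
    have h2k : 2*k ≤ g := by omega
    have hkn : k ≤ n := by omega
    rw [eval_smul, eval_mul, eval_comp, eval_sub, eval_X, eval_C,
      show ((n:ℚ) - (k:ℚ)) = ((n - k : ℕ):ℚ) by rw [Nat.cast_sub hkn],
      descPochhammer_eval_eq_descFactorial, descPochhammer_eval_eq_descFactorial,
      Nat.descFactorial_eq_factorial_mul_choose, Nat.descFactorial_eq_factorial_mul_choose]
    have h1 : (k.factorial : ℚ) ≠ 0 := Nat.cast_ne_zero.2 k.factorial_ne_zero
    have h2 : ((g-2*k).factorial : ℚ) ≠ 0 := Nat.cast_ne_zero.2 (g-2*k).factorial_ne_zero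
    push_cast
    field_simp
    rw [smul_eq_mul, one_div, eq_inv_mul_iff_mul_eq₀ (mul_ne_zero h1 h2)]
    ring
end

section
/- Let n ≥ 3 be an integer and define the integer sequence h : ℕ → ℤ by h(l) = binom(n, 2l) − n if l = 1, and h(l) = binom(n, 2l) otherwise. Then the sequence (h(0), h(1), …, h(⌊n/2⌋)) is unimodal: there exists an index p with 0 ≤ p ≤ ⌊n/2⌋ such that h(i) ≤ h(j) whenever 0 ≤ i ≤ j ≤ p, and h(i) ≥ h(j) whenever p ≤ i ≤ j ≤ ⌊n/2⌋. (This sequence is the h*-vector of the matroid polytope of the uniform matroid U^{2,n}, whose h*-polynomial is (Σ_{l≥0} binom(n,2l) T^l) − n T.) -/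
private lemma mono_half {n a b : ℕ} (hab : a ≤ b) (hb : b ≤ n / 2) :
    n.choose a ≤ n.choose b := by
  induction b, hab using Nat.le_induction with
  | base => exact le_rfl
  | succ b hb' ih =>
    exact (ih (by omega)).trans (Nat.choose_le_succ_of_lt_half_left (by omega))

private lemma choose_mono_le {n a b : ℕ} (hab : a ≤ b) (hbn : b ≤ n - a) :
    n.choose a ≤ n.choose b := by
  rcases le_or_gt b (n / 2) with hb | hb
  · exact mono_half hab hb
  · have hbn' : b ≤ n := by omega
    rw [← Nat.choose_symm hbn']
    exact mono_half (by omega) (by omega)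

/-- For `n ≥ 3` the sequence `h(l) = C(n,2l) - n·[l = 1]` (the `h*`-vector
of the matroid polytope of the uniform matroid `U^{2,n}`) is unimodal on `0 ≤ l ≤ ⌊n/2⌋`. -/
theorem hstar_U2n_unimodal (n : ℕ) (hn : 3 ≤ n) (h : ℕ → ℤ)
    (hh : ∀ l : ℕ, h l =
      if l = 1 then (n.choose (2 * l) : ℤ) - n else (n.choose (2 * l) : ℤ)) :
    ∃ p : ℕ, p ≤ n / 2 ∧
      (∀ i j : ℕ, i ≤ j → j ≤ p → h i ≤ h j) ∧
      (∀ i j : ℕ, p ≤ i → i ≤ j → j ≤ n / 2 → h j ≤ h i) := by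
  -- small cases
  rcases eq_or_lt_of_le hn with h3 | hn4
  · -- n = 3
    refine ⟨0, by omega, ?_, ?_⟩
    · intro i j hij hj
      have hi0 : i = 0 := by omega
      have hj0 : j = 0 := by omega
      simp [hi0, hj0]
    · intro i j hi hij hj
      subst h3
      have hi1 : i ≤ 1 := by omega
      have hj1 : j ≤ 1 := by omega
      interval_cases i <;> interval_cases j <;> simp [hh] <;> norm_num [Nat.choose]
  rcases eq_or_lt_of_le (by omega : 4 ≤ n) with h4 | hn5
  · -- n = 4
    subst h4
    refine ⟨1, by omega, ?_, ?_⟩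
    · intro i j hij hj
      have hi1 : i ≤ 1 := by omega
      have hj1 : j ≤ 1 := by omega
      interval_cases i <;> interval_cases j <;> simp [hh] <;> norm_num [Nat.choose]
    · intro i j hi hij hj
      have hi2 : i ≤ 2 := by omega
      have hj2 : j ≤ 2 := by omega
      interval_cases i <;> interval_cases j <;> simp [hh] <;> norm_num [Nat.choose]
  rcases eq_or_lt_of_le (by omega : 5 ≤ n) with h5 | hn6
  · -- n = 5
    subst h5
    refine ⟨1, by omega, ?_, ?_⟩
    · intro i j hij hj
      have hi1 : i ≤ 1 := by omega
      have hj1 : j ≤ 1 := by omega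
      interval_cases i <;> interval_cases j <;> simp [hh] <;> norm_num [Nat.choose]
    · intro i j hi hij hj
      have hi2 : i ≤ 2 := by omega
      have hj2 : j ≤ 2 := by omega
      interval_cases i <;> interval_cases j <;> simp [hh] <;> norm_num [Nat.choose]
  -- n ≥ 6
  have hn6' : 6 ≤ n := hn6
  set p : ℕ := (n + 2) / 4 with hp
  have hp2 : 2 ≤ p := by omega
  have step_inc : ∀ l, l < p → h l ≤ h (l + 1) := by
    intro l hl
    match l with
    | 0 =>
      rw [hh 0, hh 1]
      simp only [if_neg (by norm_num : (0:ℕ) ≠ 1), if_pos rfl]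
      have h1 : n + 1 ≤ n.choose 2 := by
        rw [Nat.choose_two_right]
        calc n + 1 = 2 * (n + 1) / 2 := by omega
        _ ≤ n * (n - 1) / 2 := Nat.div_le_div_right (by
              obtain ⟨m, rfl⟩ : ∃ m, n = m + 6 := ⟨n - 6, by omega⟩
              have e : m + 6 - 1 = m + 5 := by omega
              rw [e]; nlinarith)
      have : (n : ℤ) + 1 ≤ (n.choose 2 : ℤ) := by exact_mod_cast h1
      norm_num
      omega
    | 1 =>
      rw [hh 1, hh 2]
      simp only [if_pos rfl, if_neg (by norm_num : (2:ℕ) ≠ 1)]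
      have h1 : n.choose 2 ≤ n.choose 4 := choose_mono_le (by omega) (by omega)
      have : (n.choose 2 : ℤ) ≤ (n.choose 4 : ℤ) := by exact_mod_cast h1
      norm_num
      omega
    | (m + 2) =>
      rw [hh (m+2), hh (m+3)]
      simp only [if_neg (by omega : m + 2 ≠ 1), if_neg (by omega : m + 3 ≠ 1)]
      have h1 : n.choose (2 * (m + 2)) ≤ n.choose (2 * (m + 3)) :=
        choose_mono_le (by omega) (by omega)
      exact_mod_cast h1
  have step_dec : ∀ l, p ≤ l → h (l + 1) ≤ h l := by
    intro l hl
    rw [hh l, hh (l + 1)]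
    simp only [if_neg (by omega : l ≠ 1), if_neg (by omega : l + 1 ≠ 1)]
    have h1 : n.choose (2 * (l + 1)) ≤ n.choose (2 * l) := by
      rcases le_or_gt (2 * (l + 1)) n with hle | hlt
      · rw [← Nat.choose_symm hle]
        exact choose_mono_le (by omega) (by omega)
      · rw [Nat.choose_eq_zero_of_lt hlt]
        exact Nat.zero_le _
    exact_mod_cast h1
  refine ⟨p, by omega, ?_, ?_⟩
  · intro i j hij hjp
    induction j, hij using Nat.le_induction with
    | base => exact le_rfl
    | succ j hj ih => exact (ih (by omega)).trans (step_inc j (by omega))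
  · intro i j hi hij hj
    clear hj
    induction j, hij using Nat.le_induction with
    | base => exact le_rfl
    | succ j hj ih => exact (step_dec j (by omega)).trans ih
end

section
/- Let n ≥ 3 be an integer and consider the polynomial q(X) = ∏_{i=1}^{n−1} (2X + i) − n·∏_{i=0}^{n−2} (X + i) in ℤ[X]. Then q has degree n−1 and every coefficient of q in degrees 0, 1, …, n−1 is strictly positive. (Up to the factor 1/(n−1)!, q(k) is the Ehrhart polynomial of the matroid polytope of the uniform matroid U^{2,n}, i.e., q(k)/(n−1)! = |kP ∩ ℤ^n| for the hypersimplex P = conv{e_B : B ⊆ {1,…,n}, |B| = 2}; hence the coefficients of that Ehrhart polynomial are positive.) -/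
open Polynomial

namespace EhrhartU2nAux

noncomputable def B (t : ℕ) : Polynomial ℤ := ∏ i ∈ Finset.Icc 1 t, (X + C (i : ℤ))
noncomputable def A (t : ℕ) : Polynomial ℤ := ∏ i ∈ Finset.Icc 1 t, (2 * X + C (i : ℤ))
noncomputable def P (m : ℕ) : Polynomial ℤ := A m - (C (m : ℤ) + 1) * (X * B (m - 1))

lemma coeff_mul_nonneg {p q : Polynomial ℤ} (hp : ∀ k, 0 ≤ p.coeff k)
    (hq : ∀ k, 0 ≤ q.coeff k) : ∀ k, 0 ≤ (p * q).coeff k := by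
  intro k
  rw [Polynomial.coeff_mul]
  exact Finset.sum_nonneg fun x _ => mul_nonneg (hp _) (hq _)

lemma X_nonneg : ∀ k, 0 ≤ (X : Polynomial ℤ).coeff k := by
  intro k
  rw [Polynomial.coeff_X]
  split_ifs <;> norm_num

lemma B_nonneg (t : ℕ) : ∀ k, 0 ≤ (B t).coeff k := by
  induction t with
  | zero =>
      intro k
      have h0 : Finset.Icc 1 0 = (∅ : Finset ℕ) := rfl
      simp only [B, h0, Finset.prod_empty, Polynomial.coeff_one]
      split_ifs <;> norm_num
  | succ t ih =>
      have h : B (t + 1) = B t * (X + C ((t + 1 : ℕ) : ℤ)) := by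
        rw [B, B, Finset.prod_Icc_succ_top (Nat.le_add_left 1 t)]
      rw [h]
      refine coeff_mul_nonneg ih ?_
      intro k
      simp only [coeff_add, coeff_X, coeff_C]
      split_ifs <;> omega

lemma recursion (m : ℕ) (hm : 1 ≤ m) :
    P (m + 1) = (2 * X + (C (m : ℤ) + 1)) * P m + X * (C (m : ℤ) * X + 1) * B (m - 1) := by
  have hA : A (m + 1) = A m * (2 * X + C ((m + 1 : ℕ) : ℤ)) := by
    rw [A, A, Finset.prod_Icc_succ_top (Nat.le_add_left 1 m)]
  have hB : B m = B (m - 1) * (X + C ((m : ℕ) : ℤ)) := by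
    conv_lhs => rw [B, show m = (m - 1) + 1 by omega,
      Finset.prod_Icc_succ_top (Nat.le_add_left 1 (m - 1))]
    rw [B, show (m - 1) + 1 = m by omega]
  rw [P, P, hA, show (m + 1) - 1 = m by omega, hB]
  push_cast
  simp only [C_add, C_mul, C_1]
  ring

lemma B_natDegree_le (t : ℕ) : (B t).natDegree ≤ t := by
  have h1 : ∀ i ∈ Finset.Icc 1 t, (X + C (i : ℤ)).natDegree ≤ 1 := by
    intro i _
    exact le_trans (Polynomial.natDegree_add_le _ _)
      (by simp [Polynomial.natDegree_X, Polynomial.natDegree_C])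
  have h2 := Finset.sum_le_sum h1
  have h3 := le_trans (Polynomial.natDegree_prod_le (Finset.Icc 1 t)
    (fun i => X + C (i : ℤ))) h2
  simpa [B, Nat.card_Icc] using h3

lemma A_natDegree_le (t : ℕ) : (A t).natDegree ≤ t := by
  have h1 : ∀ i ∈ Finset.Icc 1 t, (2 * X + C (i : ℤ)).natDegree ≤ 1 := by
    intro i _
    refine le_trans (Polynomial.natDegree_add_le _ _) (max_le ?_ ?_)
    · exact le_trans Polynomial.natDegree_mul_le (by simp [Polynomial.natDegree_X])
    · simp [Polynomial.natDegree_C]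
  have h2 := Finset.sum_le_sum h1
  have h3 := le_trans (Polynomial.natDegree_prod_le (Finset.Icc 1 t)
    (fun i => 2 * X + C (i : ℤ))) h2
  simpa [A, Nat.card_Icc] using h3

lemma P_natDegree_le (m : ℕ) (hm : 1 ≤ m) : (P m).natDegree ≤ m := by
  refine le_trans (Polynomial.natDegree_sub_le _ _) (max_le (A_natDegree_le m) ?_)
  refine le_trans (Polynomial.natDegree_mul_le) ?_
  have h1 : ((C (m : ℤ) + 1)).natDegree ≤ 0 :=
    le_trans (Polynomial.natDegree_add_le _ _) (by simp [Polynomial.natDegree_C])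
  have h2 : (X * B (m - 1)).natDegree ≤ 1 + (m - 1) := by
    refine le_trans Polynomial.natDegree_mul_le ?_
    have := B_natDegree_le (m - 1)
    simp [Polynomial.natDegree_X]
    omega
  omega

lemma P_coeff_eq_zero (m : ℕ) (hm : 1 ≤ m) {k : ℕ} (hk : m < k) : (P m).coeff k = 0 :=
  Polynomial.coeff_eq_zero_of_natDegree_lt (lt_of_le_of_lt (P_natDegree_le m hm) hk)

lemma P_two : P 2 = X ^ 2 + C 3 * X + C 2 := by
  have h2 : Finset.Icc 1 2 = {1, 2} := rfl
  have h1 : Finset.Icc 1 1 = {1} := rfl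
  rw [P, A, B, h2, h1]
  simp only [Finset.prod_insert (by decide : (1 : ℕ) ∉ ({2} : Finset ℕ)),
    Finset.prod_singleton]
  push_cast
  have h3 : (C (3 : ℤ)) = 3 := by norm_num
  have h4 : (C (2 : ℤ)) = 2 := by norm_num
  rw [h3, h4]
  simp only [C_1]
  ring

lemma P_coeff_pos : ∀ m, 2 ≤ m → ∀ k, k ≤ m → 0 < (P m).coeff k := by
  intro m hm
  induction m, hm using Nat.le_induction with
  | base =>
      intro k hk
      rw [P_two]
      interval_cases k <;>
        simp [coeff_add, coeff_X_pow, coeff_C_mul, coeff_X, coeff_C]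
  | succ m hm ih =>
      have hPnn : ∀ k, 0 ≤ (P m).coeff k := by
        intro k
        rcases le_or_gt k m with h | h
        · exact le_of_lt (ih k h)
        · rw [P_coeff_eq_zero m (by omega) h]
      intro k hk
      rw [recursion m (by omega)]
      rw [Polynomial.coeff_add]
      have hnn2 : 0 ≤ (X * (C (m : ℤ) * X + 1) * B (m - 1)).coeff k := by
        refine coeff_mul_nonneg (coeff_mul_nonneg X_nonneg ?_) (B_nonneg (m - 1)) k
        intro j
        simp only [coeff_add, coeff_C_mul, coeff_X, Polynomial.coeff_one]
        split_ifs <;> simp <;> positivity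
      have hsplit : ((2 * X + (C (m : ℤ) + 1)) * P m).coeff k
          = 2 * (X * P m).coeff k + ((m : ℤ) + 1) * (P m).coeff k := by
        have h2 : (2 * X + (C (m : ℤ) + 1)) * P m
            = C 2 * (X * P m) + C ((m : ℤ) + 1) * P m := by
          have hC2 : (C (2 : ℤ)) = 2 := by norm_num
          rw [C_add, C_1, hC2]
          ring
        rw [h2, Polynomial.coeff_add, Polynomial.coeff_C_mul, Polynomial.coeff_C_mul]
      rw [hsplit]
      have hXPnn : ∀ j, 0 ≤ (X * P m).coeff j := coeff_mul_nonneg X_nonneg hPnn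
      rcases le_or_gt k m with hkm | hkm
      · have hpos : 0 < ((m : ℤ) + 1) * (P m).coeff k :=
          mul_pos (by positivity) (ih k hkm)
        nlinarith [hXPnn k]
      · have hk1 : k = m + 1 := by omega
        subst hk1
        rw [Polynomial.coeff_X_mul]
        have h0 : (P m).coeff (m + 1) = 0 := P_coeff_eq_zero m (by omega) (by omega)
        rw [h0]
        have := ih m le_rfl
        nlinarith

end EhrhartU2nAux

open EhrhartU2nAux in
/-- For `n ≥ 3`, the polynomial
`q(X) = ∏_{i=1}^{n-1} (2X + i) − n·∏_{i=0}^{n-2} (X + i)` in `ℤ[X]` has degree `n-1` and all of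
its coefficients in degrees `0,…,n-1` are strictly positive.  (Up to the factor `1/(n-1)!`,
`q` is the Ehrhart polynomial of the matroid polytope of `U^{2,n}`.) -/
theorem ehrhart_U2n_coeffs_pos (n : ℕ) (hn : 3 ≤ n) (q : Polynomial ℤ)
    (hq : q = (∏ i ∈ Finset.Icc 1 (n - 1), (2 * X + C (i : ℤ))) -
        C (n : ℤ) * ∏ i ∈ Finset.range (n - 1), (X + C (i : ℤ))) :
    q.degree = (n - 1 : ℕ) ∧ ∀ k : ℕ, k ≤ n - 1 → 0 < q.coeff k := by
  set m := n - 1 with hmdef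
  have hm : 2 ≤ m := by omega
  have hqP : q = P m := by
    rw [hq, P, A]
    congr 1
    have hrange : ∏ i ∈ Finset.range (n - 1), (X + C (i : ℤ)) = X * B (m - 1) := by
      rw [show n - 1 = (n - 2) + 1 by omega, Finset.prod_range_succ']
      have hB : B (n - 2) = ∏ i ∈ Finset.range (n - 2), (X + C (((i + 1 : ℕ)) : ℤ)) := by
        rw [B, ← Finset.Ico_add_one_right_eq_Icc, Finset.prod_Ico_eq_prod_range]
        refine Finset.prod_congr (by congr 1) fun i _ => by rw [Nat.add_comm 1 i]
      rw [show ((0 : ℕ) : ℤ) = 0 from rfl, C_0, add_zero]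
      rw [show m - 1 = n - 2 by omega, hB]
      ring
    rw [hrange]
    have hC : C ((n : ℕ) : ℤ) = C ((m : ℕ) : ℤ) + 1 := by
      rw [← C_1, ← C_add]
      congr 1
      have : (m : ℤ) = (n : ℤ) - 1 := by
        rw [hmdef]
        push_cast [Nat.cast_sub (by omega : 1 ≤ n)]
        ring
      omega
    rw [hC]
  have hpos : ∀ k, k ≤ m → 0 < q.coeff k := by
    intro k hk
    rw [hqP]
    exact P_coeff_pos m hm k hk
  constructor
  · have hle : q.degree ≤ (m : ℕ) := by
      refine le_trans Polynomial.degree_le_natDegree ?_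
      exact_mod_cast (by rw [hqP]; exact P_natDegree_le m (by omega))
    exact Polynomial.degree_eq_of_le_of_coeff_ne_zero hle (ne_of_gt (hpos m le_rfl))
  · exact hpos
end

section
/- Let M be a connected matroid of rank r ≥ 1 on the ground set {1,…,n}, let B_1, …, B_n be bases of M, and let X be the n × n integer matrix whose a-th row is the incidence vector e_{B_a} ∈ {0,1}^n. If the rows of X are linearly independent (over ℚ), then |det(X)| = k·r for some positive integer k. -/
/-- The `0/1` incidence vector (in `ℤ^n`) of a subset `B` of `{1,…,n}`. -/
noncomputable def incVec {n : ℕ} (B : Set (Fin n)) : Fin n → ℤ :=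
  B.indicator 1

/-- A circuit of a matroid: an inclusion-minimal dependent set, i.e. a dependent set all of
whose proper subsets are independent. -/
def Matroid.IsCircuit' {α : Type*} (M : Matroid α) (C : Set α) : Prop :=
  M.Dep C ∧ ∀ D : Set α, D ⊂ C → M.Indep D

/-- A matroid is connected if every two distinct elements of its ground set lie in a common
circuit. -/
def Matroid.ConnectedMatroid {α : Type*} (M : Matroid α) : Prop :=
  ∀ x ∈ M.E, ∀ y ∈ M.E, x ≠ y → ∃ C : Set α, M.IsCircuit' C ∧ x ∈ C ∧ y ∈ C

/-- The graph `G(X)` on vertex set `{1,…,n}` associated to a list `X` of `n` vectors in `ℤ^n`: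
vertices `a ≠ b` are adjacent iff `X a - X b = e_s - e_t` for some standard unit vectors
`e_s ≠ e_t`. -/
def Ggraph {n : ℕ} (X : Fin n → Fin n → ℤ) : SimpleGraph (Fin n) :=
  SimpleGraph.fromRel fun a b =>
    ∃ s t : Fin n, s ≠ t ∧ X a - X b = Pi.single s 1 - Pi.single t 1

/-- The graph `g(X)` on vertex set `{1,…,n}` associated to a list `X` of `n` vectors in `ℤ^n`:
vertices `s ≠ t` are adjacent iff `X a - X b = e_s - e_t` for some indices `a`, `b`. -/
def ggraph {n : ℕ} (X : Fin n → Fin n → ℤ) : SimpleGraph (Fin n) :=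
  SimpleGraph.fromRel fun s t =>
    ∃ a b : Fin n, X a - X b = Pi.single s 1 - Pi.single t 1

/-- If `M` is a connected matroid of rank `r ≥ 1` on `{1,…,n}` and `X` is an
`n × n` integer matrix whose rows are incidence vectors of bases of `M` which are linearly
independent over `ℚ`, then `|det X| = k·r` for some positive integer `k`. -/
theorem det_bases_matrix_multiple_of_rank (n r : ℕ) (hr : 1 ≤ r)
    (M : Matroid (Fin n)) (hE : M.E = Set.univ)
    (hrank : ∀ B : Set (Fin n), M.IsBase B → B.ncard = r)
    (hconn : M.ConnectedMatroid)
    (B : Fin n → Set (Fin n)) (hB : ∀ a : Fin n, M.IsBase (B a))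
    (hli : LinearIndependent ℚ fun a : Fin n => fun i : Fin n => (incVec (B a) i : ℚ)) :
    ∃ k : ℕ, 0 < k ∧ (Matrix.of fun a i : Fin n => incVec (B a) i).det.natAbs = k * r := by
  classical
  set A : Matrix (Fin n) (Fin n) ℤ := Matrix.of fun a i : Fin n => incVec (B a) i with hA
  -- n > 0
  rcases Nat.eq_zero_or_pos n with hn | hn
  · exfalso
    obtain ⟨B0, hB0⟩ := M.exists_isBase
    have h0 : B0 = ∅ := by
      subst hn; exact Set.eq_empty_of_isEmpty B0
    have := hrank B0 hB0
    rw [h0, Set.ncard_empty] at this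
    omega
  -- row sums are r
  have hsum : ∀ a : Fin n, ∑ i, A a i = (r : ℤ) := by
    intro a
    have hc : (B a).ncard = r := hrank _ (hB a)
    calc ∑ i, A a i = ∑ i, (B a).indicator 1 i := rfl
      _ = ((B a).toFinset.card : ℤ) := by
          rw [Finset.sum_indicator_eq_sum_filter]
          simp [Set.toFinset]
      _ = (r : ℤ) := by
          rw [← Set.ncard_eq_toFinset_card', hc]
  -- det ≠ 0
  have hdet0 : A.det ≠ 0 := by
    have hA' : IsUnit (A.map (Int.cast : ℤ → ℚ)) := by
      rw [← Matrix.linearIndependent_rows_iff_isUnit]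
      convert hli
      all_goals rfl
    have : (A.map (Int.cast : ℤ → ℚ)).det ≠ 0 := by
      rcases Matrix.isUnit_iff_isUnit_det _ |>.mp hA' with h
      exact h.ne_zero
    intro h
    apply this
    have : A.map (Int.cast : ℤ → ℚ) = (Int.castRingHom ℚ).mapMatrix A := rfl
    rw [this, ← RingHom.map_det, h]
    simp
  -- divisibility
  set j0 : Fin n := ⟨0, hn⟩
  have key : A.det = (r : ℤ) * (A.updateCol j0 (fun _ => (1:ℤ))).det := by
    have h1 : (A.updateCol j0 (fun k => ∑ i, (1:ℤ) • A k i)).det = A.det := by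
      rw [Matrix.det_updateCol_sum A j0 (fun _ => 1)]; simp
    have h2 : (fun k => ∑ i, (1:ℤ) • A k i) = (r : ℤ) • (fun _ : Fin n => (1:ℤ)) := by
      funext k; simp [hsum k]
    rw [h2] at h1
    rw [Matrix.det_updateCol_smul] at h1
    rw [← h1]
  refine ⟨(A.updateCol j0 (fun _ => (1:ℤ))).det.natAbs, ?_, ?_⟩
  · rw [Int.natAbs_pos]
    intro h
    rw [h, mul_zero] at key
    exact hdet0 key
  · rw [key, Int.natAbs_mul]
    simp [mul_comm]
end

section
/- Let M be a connected matroid of rank r on the ground set {1,…,n}, let B_1, …, B_n be bases of M, let X = (X_1, …, X_n) be the list of their incidence vectors X_a = e_{B_a} ∈ ℤ^n, and suppose X_1, …, X_n are linearly independent (over ℚ). Then the simple graphs G(X) and g(X) have the same number of connected components. -/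
open Finset Module


variable {V : Type*} [Fintype V] [DecidableEq V]

noncomputable def compSum (H : SimpleGraph V) [Fintype H.ConnectedComponent]
    [DecidableEq H.ConnectedComponent] :
    (V → ℚ) →ₗ[ℚ] (H.ConnectedComponent → ℚ) where
  toFun x c := ∑ a ∈ univ.filter (fun a => H.connectedComponentMk a = c), x a
  map_add' x y := by funext c; simp [Finset.sum_add_distrib]
  map_smul' m x := by funext c; simp [Finset.mul_sum]

theorem lemA (H : SimpleGraph V) :
    finrank ℚ (Submodule.span ℚ
      {x : V → ℚ | ∃ a b, H.Adj a b ∧ x = Pi.single a 1 - Pi.single b 1}) +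
      Nat.card H.ConnectedComponent = Fintype.card V := by
  classical
  have : Finite H.ConnectedComponent := Quot.finite _
  have : Fintype H.ConnectedComponent := Fintype.ofFinite _
  have hout : ∀ c : H.ConnectedComponent, H.connectedComponentMk c.out = c :=
    fun c => Quot.out_eq c
  set S : Submodule ℚ (V → ℚ) := Submodule.span ℚ
      {x : V → ℚ | ∃ a b, H.Adj a b ∧ x = Pi.single a 1 - Pi.single b 1} with hS
  set φ := compSum H with hφ
  -- reachable implies difference in S
  have hreach : ∀ a b : V, H.Reachable a b → Pi.single a (1:ℚ) - Pi.single b 1 ∈ S := by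
    intro a b ⟨w⟩
    induction w with
    | nil => simp
    | cons h p ih =>
      rename_i u v c
      have h1 : Pi.single u (1:ℚ) - Pi.single v 1 ∈ S :=
        Submodule.subset_span ⟨u, v, h, rfl⟩
      have := S.add_mem h1 ih
      simpa using this
  have hsurj : Function.Surjective φ := by
    intro y
    refine ⟨fun a => if a = (H.connectedComponentMk a).out then y (H.connectedComponentMk a) else 0, ?_⟩
    funext c
    simp only [hφ, compSum, LinearMap.coe_mk, AddHom.coe_mk]
    rw [Finset.sum_congr rfl (fun a ha => ?_)
      (g := fun a => if a = c.out then y c else 0)]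
    · rw [Finset.sum_ite_eq' (univ.filter (fun a => H.connectedComponentMk a = c)) c.out
        (fun _ => y c)]
      simp [hout c]
    · have h2 := (Finset.mem_filter.mp ha).2
      rw [h2]
  have hker : LinearMap.ker φ = S := by
    ext x
    constructor
    · intro hx
      have hx' : ∀ c, ∑ a ∈ univ.filter (fun a => H.connectedComponentMk a = c), x a = 0 :=
        fun c => congrFun (LinearMap.mem_ker.mp hx) c
      have hxdec : x = (∑ a : V, x a • ((Pi.single a 1 : V → ℚ) - (Pi.single (H.connectedComponentMk a).out 1 : V → ℚ)))
          + ∑ a : V, x a • (Pi.single (H.connectedComponentMk a).out 1 : V → ℚ) := by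
        rw [← Finset.sum_add_distrib]
        have h3 : ∀ a : V, x a • ((Pi.single a 1 : V → ℚ) - (Pi.single (H.connectedComponentMk a).out 1 : V → ℚ))
            + x a • (Pi.single (H.connectedComponentMk a).out 1 : V → ℚ) = Pi.single a (x a) := by
          intro a
          rw [smul_sub, sub_add_cancel]
          funext j; simp [Pi.single_apply]
        simp_rw [h3]
        exact (Finset.univ_sum_single x).symm
      rw [hxdec]
      apply S.add_mem
      · exact Submodule.sum_mem _ fun a _ => S.smul_mem _
          (hreach a _ (by rw [← SimpleGraph.ConnectedComponent.eq, hout]))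
      · have h2 : (∑ a : V, x a • (Pi.single (H.connectedComponentMk a).out 1 : V → ℚ)) = 0 := by
          rw [← Finset.sum_fiberwise univ (fun a => H.connectedComponentMk a)
            (fun a => x a • (Pi.single (H.connectedComponentMk a).out 1 : V → ℚ))]
          refine Finset.sum_eq_zero fun c _ => ?_
          have h4 : ∀ a ∈ univ.filter (fun a => H.connectedComponentMk a = c),
              x a • (Pi.single (H.connectedComponentMk a).out 1 : V → ℚ)
                = x a • (Pi.single c.out 1 : V → ℚ) := by
            intro a ha
            rw [(Finset.mem_filter.mp ha).2]
          rw [Finset.sum_congr rfl h4, ← Finset.sum_smul, hx' c, zero_smul]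
        rw [h2]; exact S.zero_mem
    · intro hx
      refine Submodule.span_le.mpr ?_ hx
      rintro _ ⟨a, b, hab, rfl⟩
      simp only [SetLike.mem_coe, LinearMap.mem_ker]
      funext c
      have hmk : H.connectedComponentMk a = H.connectedComponentMk b :=
        SimpleGraph.ConnectedComponent.connectedComponentMk_eq_of_adj hab
      simp only [hφ, compSum, LinearMap.coe_mk, AddHom.coe_mk, Pi.zero_apply, Pi.sub_apply,
        Pi.single_apply, Finset.sum_sub_distrib]
      rw [Finset.sum_ite_eq' _ a (fun _ => (1:ℚ)), Finset.sum_ite_eq' _ b (fun _ => (1:ℚ))]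
      by_cases h : H.connectedComponentMk a = c <;>
        simp [Finset.mem_filter, h, hmk ▸ h, ← hmk]
  have hrn := LinearMap.finrank_range_add_finrank_ker φ
  rw [LinearMap.range_eq_top.mpr hsurj, hker] at hrn
  rw [finrank_top, Module.finrank_pi, Module.finrank_pi] at hrn
  rw [Nat.card_eq_fintype_card]
  omega

variable {V : Type*} [Fintype V] [DecidableEq V]

theorem lemA' (H : SimpleGraph V) (Y : V → (V → ℚ)) (hli : LinearIndependent ℚ Y) :
    finrank ℚ (Submodule.span ℚ {x : V → ℚ | ∃ a b, H.Adj a b ∧ x = Y a - Y b}) +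
      Nat.card H.ConnectedComponent = Fintype.card V := by
  classical
  cases isEmpty_or_nonempty V with
  | inl h =>
    have h0 : {x : V → ℚ | ∃ a b, H.Adj a b ∧ x = Y a - Y b} = ∅ := by
      ext x; simp only [Set.mem_setOf_eq, Set.mem_empty_iff_false, iff_false]
      rintro ⟨a, _, _, _⟩; exact h.false a
    have h1 : Nat.card H.ConnectedComponent = 0 := by
      have : IsEmpty H.ConnectedComponent := inferInstance
      simp
    rw [h0, h1, Submodule.span_empty, finrank_bot, Fintype.card_eq_zero]
  | inr hne =>
  have hc : Fintype.card V = finrank ℚ (V → ℚ) := by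
    rw [Module.finrank_pi]
  let bY : Basis V ℚ (V → ℚ) := basisOfLinearIndependentOfCardEqFinrank hli hc
  let e : (V → ℚ) ≃ₗ[ℚ] (V → ℚ) := (Pi.basisFun ℚ V).equiv bY (Equiv.refl V)
  have he : ∀ a : V, e (Pi.single a 1) = Y a := by
    intro a
    rw [← Pi.basisFun_apply, Basis.equiv_apply, Equiv.refl_apply]
    simp [bY, coe_basisOfLinearIndependentOfCardEqFinrank]
  have himg : (e : (V → ℚ) →ₗ[ℚ] (V → ℚ)) ''
      {x : V → ℚ | ∃ a b, H.Adj a b ∧ x = Pi.single a 1 - Pi.single b 1}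
      = {x : V → ℚ | ∃ a b, H.Adj a b ∧ x = Y a - Y b} := by
    ext x
    constructor
    · rintro ⟨y, ⟨a, b, hab, rfl⟩, rfl⟩
      exact ⟨a, b, hab, by simp only [map_sub, LinearEquiv.coe_coe, he]⟩
    · rintro ⟨a, b, hab, rfl⟩
      exact ⟨Pi.single a 1 - Pi.single b 1, ⟨a, b, hab, rfl⟩,
        by simp only [map_sub, LinearEquiv.coe_coe, he]⟩
  have hmap : (Submodule.span ℚ
      {x : V → ℚ | ∃ a b, H.Adj a b ∧ x = Pi.single a 1 - Pi.single b 1}).map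
      (e : (V → ℚ) →ₗ[ℚ] (V → ℚ))
      = Submodule.span ℚ {x : V → ℚ | ∃ a b, H.Adj a b ∧ x = Y a - Y b} := by
    rw [Submodule.map_span, himg]
  have := lemA H
  rwa [← LinearEquiv.finrank_map_eq e, hmap] at this

lemma cast_diff_eq {n : ℕ} (u v : Fin n → ℤ) (s t : Fin n) :
    ((fun i => (u i : ℚ)) - (fun i => (v i : ℚ)) = Pi.single s 1 - Pi.single t 1) ↔
      u - v = Pi.single s 1 - Pi.single t 1 := by
  constructor <;> intro h <;> funext i <;> have h2 := congrFun h i <;>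
    simp only [Pi.sub_apply, Pi.single_apply] at h2 ⊢
  · exact_mod_cast h2
  · exact_mod_cast congrArg (fun z : ℤ => (z : ℚ)) h2

lemma ne_of_single_diff {n : ℕ} {s t : Fin n} (hst : s ≠ t) {u v : Fin n → ℤ}
    (h : u - v = Pi.single s 1 - Pi.single t 1) : u ≠ v := by
  intro huv
  rw [huv, sub_self] at h
  have h2 := congrFun h s
  simp [Pi.single_apply, hst] at h2

theorem main_aux {n : ℕ} (X : Fin n → Fin n → ℤ)
    (hli : LinearIndependent ℚ fun a : Fin n => fun i : Fin n => (X a i : ℚ)) :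
    Nat.card (Ggraph X).ConnectedComponent = Nat.card (ggraph X).ConnectedComponent := by
  classical
  set Y : Fin n → Fin n → ℚ := fun a => fun i => (X a i : ℚ) with hY
  have hli' : LinearIndependent ℚ Y := hli
  have hYd : ∀ a b s t, (Y a - Y b = Pi.single s 1 - Pi.single t 1) ↔
      X a - X b = Pi.single s 1 - Pi.single t 1 := fun a b s t => cast_diff_eq (X a) (X b) s t
  have hset : {x : Fin n → ℚ | ∃ a b, (Ggraph X).Adj a b ∧ x = Y a - Y b}
      = {x : Fin n → ℚ | ∃ s t, (ggraph X).Adj s t ∧ x = Pi.single s 1 - Pi.single t 1} := by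
    ext x
    simp only [Set.mem_setOf_eq, Ggraph, ggraph, SimpleGraph.fromRel_adj]
    constructor
    · rintro ⟨a, b, ⟨hab, hrel⟩, rfl⟩
      rcases hrel with ⟨s, t, hst, hX⟩ | ⟨s, t, hst, hX⟩
      · exact ⟨s, t, ⟨hst, Or.inl ⟨a, b, hX⟩⟩, (hYd a b s t).mpr hX⟩
      · refine ⟨t, s, ⟨hst.symm, Or.inr ⟨b, a, hX⟩⟩, ?_⟩
        have := (hYd b a s t).mpr hX
        rw [show Y a - Y b = -(Y b - Y a) by ring, this]
        ring
    · rintro ⟨s, t, ⟨hst, hrel⟩, rfl⟩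
      rcases hrel with ⟨a, b, hX⟩ | ⟨a, b, hX⟩
      · exact ⟨a, b, ⟨fun h => ne_of_single_diff hst hX (by rw [h]), Or.inl ⟨s, t, hst, hX⟩⟩,
          ((hYd a b s t).mpr hX).symm⟩
      · refine ⟨b, a, ⟨fun h => ne_of_single_diff hst.symm hX (by rw [h]), Or.inr ⟨t, s, hst.symm, hX⟩⟩, ?_⟩
        have := (hYd a b t s).mpr hX
        rw [show Y b - Y a = -(Y a - Y b) by ring, this]
        ring
  have h1 := lemA' (Ggraph X) Y hli'
  have h2 := lemA (ggraph X)
  rw [hset] at h1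
  omega


/-- If `M` is a connected matroid of rank `r` on `{1,…,n}` and
`X = (X_1,…,X_n)` is a linearly independent (over `ℚ`) list of incidence vectors of bases of
`M`, then the graphs `G(X)` and `g(X)` have the same number of connected components. -/
theorem Ggraph_ggraph_same_components (n r : ℕ)
    (M : Matroid (Fin n)) (hE : M.E = Set.univ)
    (hrank : ∀ B : Set (Fin n), M.IsBase B → B.ncard = r)
    (hconn : M.ConnectedMatroid)
    (B : Fin n → Set (Fin n)) (hB : ∀ a : Fin n, M.IsBase (B a))
    (hli : LinearIndependent ℚ fun a : Fin n => fun i : Fin n => (incVec (B a) i : ℚ)) :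
    Nat.card (Ggraph fun a => incVec (B a)).ConnectedComponent =
      Nat.card (ggraph fun a => incVec (B a)).ConnectedComponent :=
  main_aux _ hli
end

section
/- Let M be a connected matroid of rank r on the ground set {1,…,n}, let B_1, …, B_n be bases of M, let X = (X_1, …, X_n) be the list of their incidence vectors X_a = e_{B_a} ∈ ℤ^n, and suppose X_1, …, X_n are linearly independent (over ℚ). If the graph G(X) is connected, then |det(X)| = r, where X is viewed as the n × n integer matrix with rows X_1, …, X_n. -/
private lemma aux_root_mem {n : ℕ} (ρ : Fin n → Fin n → ℤ)
    (hρ : ∀ (j : Fin n) (h : (j : ℕ) + 1 < n),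
      ρ j = Pi.single j 1 - Pi.single ⟨(j : ℕ) + 1, h⟩ 1) (s t : Fin n) :
    (Pi.single s 1 - Pi.single t 1 : Fin n → ℤ) ∈ Submodule.span ℤ (Set.range ρ) := by
  have step : ∀ k : ℕ, ∀ s t : Fin n, (t : ℕ) = (s : ℕ) + k →
      (Pi.single s 1 - Pi.single t 1 : Fin n → ℤ) ∈ Submodule.span ℤ (Set.range ρ) := by
    intro k
    induction k with
    | zero =>
      intro s t h
      have : s = t := Fin.ext (by omega)
      subst this; simp
    | succ k ih =>
      intro s t h
      have hk : (s : ℕ) + k < n := by have := t.isLt; omega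
      set u : Fin n := ⟨(s : ℕ) + k, hk⟩ with hu
      have hu' : (u : ℕ) = (s : ℕ) + k := rfl
      have h1 := ih s u rfl
      have hlt : (u : ℕ) + 1 < n := by have := t.isLt; omega
      have h2 : (Pi.single u 1 - Pi.single t 1 : Fin n → ℤ) ∈ Submodule.span ℤ (Set.range ρ) := by
        have ht : (⟨(u : ℕ) + 1, hlt⟩ : Fin n) = t := Fin.ext (by simp [hu']; omega)
        have he : ρ u = Pi.single u 1 - Pi.single t 1 := by rw [hρ u hlt, ht]
        rw [← he]
        exact Submodule.subset_span ⟨u, rfl⟩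
      have h3 := Submodule.add_mem _ h1 h2
      simpa [sub_add_sub_cancel] using h3
  rcases le_total (s : ℕ) (t : ℕ) with h | h
  · exact step ((t : ℕ) - (s : ℕ)) s t (by omega)
  · have h1 := step ((s : ℕ) - (t : ℕ)) t s (by omega)
    have h2 := Submodule.neg_mem _ h1
    simpa [neg_sub] using h2

private lemma aux_sumzero_mem {n : ℕ} (ρ : Fin n → Fin n → ℤ)
    (hρ : ∀ (j : Fin n) (h : (j : ℕ) + 1 < n),
      ρ j = Pi.single j 1 - Pi.single ⟨(j : ℕ) + 1, h⟩ 1) :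
    ∀ v : Fin n → ℤ, (∑ i, v i = 0) → v ∈ Submodule.span ℤ (Set.range ρ) := by
  classical
  have main : ∀ N : ℕ, ∀ v : Fin n → ℤ, (∑ i, (v i).natAbs) = N → (∑ i, v i = 0) →
      v ∈ Submodule.span ℤ (Set.range ρ) := by
    intro N
    induction N using Nat.strong_induction_on with
    | _ N ih =>
      intro v hN hv
      by_cases hv0 : v = 0
      · simp [hv0]
      · have hex : ∃ s, 0 < v s := by
          by_contra hc
          push_neg at hc
          exact hv0 (funext fun i =>
            (Finset.sum_eq_zero_iff_of_nonpos (fun i _ => hc i)).mp hv i (Finset.mem_univ i))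
        have hex' : ∃ t, v t < 0 := by
          by_contra hc
          push_neg at hc
          exact hv0 (funext fun i =>
            (Finset.sum_eq_zero_iff_of_nonneg (fun i _ => hc i)).mp hv i (Finset.mem_univ i))
        obtain ⟨s, hs⟩ := hex
        obtain ⟨t, ht⟩ := hex'
        have hst : s ≠ t := fun h => by rw [h] at hs; omega
        set v' : Fin n → ℤ := v - (Pi.single s 1 - Pi.single t 1) with hv'def
        have hv's : v' s = v s - 1 := by
          simp [hv'def, Pi.single_apply, hst]
        have hv't : v' t = v t + 1 := by
          simp [hv'def, Pi.single_apply, Ne.symm hst]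
        have hv'i : ∀ i, i ≠ s → i ≠ t → v' i = v i := by
          intro i h1 h2
          simp [hv'def, Pi.single_apply, h1, h2]
        have hts : t ∈ (Finset.univ.erase s) := Finset.mem_erase.mpr ⟨Ne.symm hst, Finset.mem_univ t⟩
        have hsplit : ∀ f : Fin n → ℕ,
            ∑ i, f i = f s + (f t + ∑ i ∈ (Finset.univ.erase s).erase t, f i) := by
          intro f
          rw [← Finset.add_sum_erase _ f (Finset.mem_univ s), ← Finset.add_sum_erase _ f hts]
        have e3 : ∑ i ∈ (Finset.univ.erase s).erase t, (v' i).natAbs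
            = ∑ i ∈ (Finset.univ.erase s).erase t, (v i).natAbs := by
          refine Finset.sum_congr rfl fun i hi => ?_
          rw [hv'i i (Finset.ne_of_mem_erase (Finset.mem_of_mem_erase hi))
            (Finset.ne_of_mem_erase hi)]
        have hNv' : ∑ i, (v' i).natAbs + 2 = N := by
          rw [← hN, hsplit (fun i => (v' i).natAbs), hsplit (fun i => (v i).natAbs), e3]
          have e1 : (v' s).natAbs + 1 = (v s).natAbs := by rw [hv's]; omega
          have e2 : (v' t).natAbs + 1 = (v t).natAbs := by rw [hv't]; omega
          omega
        have hv'sum : ∑ i, v' i = 0 := by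
          simp only [hv'def, Pi.sub_apply, Finset.sum_sub_distrib, hv]
          simp [Finset.sum_sub_distrib, Pi.single_apply]
        have hmem := ih (∑ i, (v' i).natAbs) (by omega) v' rfl hv'sum
        have hroot := aux_root_mem ρ hρ s t
        have hadd := Submodule.add_mem _ hmem hroot
        simpa [hv'def, sub_add_cancel] using hadd
  intro v hv
  exact main _ v rfl hv

/-- If `M` is a connected matroid of rank `r` on `{1,…,n}`,
`X = (X_1,…,X_n)` is a linearly independent (over `ℚ`) list of incidence vectors of bases of
`M`, and the graph `G(X)` is connected, then `|det X| = r`. -/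
theorem det_eq_rank_of_Ggraph_connected (n r : ℕ)
    (M : Matroid (Fin n)) (hE : M.E = Set.univ)
    (hrank : ∀ B : Set (Fin n), M.IsBase B → B.ncard = r)
    (hconn : M.ConnectedMatroid)
    (B : Fin n → Set (Fin n)) (hB : ∀ a : Fin n, M.IsBase (B a))
    (hli : LinearIndependent ℚ fun a : Fin n => fun i : Fin n => (incVec (B a) i : ℚ))
    (hG : (Ggraph fun a => incVec (B a)).Connected) :
    (Matrix.of fun a i : Fin n => incVec (B a) i).det.natAbs = r := by
  classical
  have hn : 0 < n := Fin.pos_iff_nonempty.mpr hG.nonempty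
  set X : Fin n → Fin n → ℤ := fun a => incVec (B a) with hXdef
  -- row sums are `r`
  have hsum : ∀ a, ∑ i, X a i = (r : ℤ) := by
    intro a
    have h1 : ∑ i, X a i = ((Finset.univ.filter (· ∈ B a)).card : ℤ) := by
      rw [Finset.card_filter]
      push_cast
      refine Finset.sum_congr rfl fun i _ => ?_
      simp [hXdef, incVec, Set.indicator_apply]
    rw [h1]
    congr 1
    rw [← hrank (B a) (hB a), ← Nat.card_coe_set_eq, Nat.card_eq_fintype_card,
      Fintype.card_subtype]
  have a0 : Fin n := ⟨0, hn⟩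
  -- `r` is positive
  have hr : 0 < r := by
    by_contra h
    have hr0 : r = 0 := by omega
    have hBe : B ⟨0, hn⟩ = ∅ := by
      have h2 := hrank _ (hB ⟨0, hn⟩)
      rw [hr0] at h2
      exact (Set.ncard_eq_zero (Set.toFinite _)).mp h2
    have h3 := hli.ne_zero ⟨0, hn⟩
    apply h3
    funext i
    simp [incVec, hBe]
  -- the lattice spanned by the rows
  set L : Submodule ℤ (Fin n → ℤ) := Submodule.span ℤ (Set.range X) with hLdef
  have hXL : ∀ a, X a ∈ L := fun a => Submodule.subset_span ⟨a, rfl⟩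
  -- the rational matrix is invertible
  set Q : Matrix (Fin n) (Fin n) ℚ := Matrix.of fun a i => ((X a i : ℤ) : ℚ) with hQdef
  have hQ : IsUnit Q := by
    apply Matrix.linearIndependent_rows_iff_isUnit.mp
    exact hli
  have hweq : ∀ w : Fin n → ℚ, (∀ a, ∑ i, (X a i : ℚ) * w i = 0) → w = 0 := by
    intro w hww
    have hmv : Q.mulVec w = 0 := by
      funext a
      simpa [Matrix.mulVec, dotProduct, hQdef] using hww a
    have hdet : IsUnit Q.det := (Matrix.isUnit_iff_isUnit_det Q).mp hQ
    have h1 := congrArg (fun z => Q⁻¹.mulVec z) hmv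
    simpa [Matrix.mulVec_mulVec, Matrix.nonsing_inv_mul Q hdet] using h1
  -- all roots `e_s - e_t` lie in `L`
  have rootL : ∀ s t : Fin n, (Pi.single s 1 - Pi.single t 1 : Fin n → ℤ) ∈ L := by
    intro s t
    set P : Finset (Fin n) := Finset.univ.filter
        (fun i => (Pi.single s 1 - Pi.single i 1 : Fin n → ℤ) ∈ L) with hPdef
    have hsP : s ∈ P := by simp [hPdef]
    have hiff : ∀ u v : Fin n, (Pi.single u 1 - Pi.single v 1 : Fin n → ℤ) ∈ L →
        (u ∈ P ↔ v ∈ P) := by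
      intro u v huv
      simp only [hPdef, Finset.mem_filter, Finset.mem_univ, true_and]
      constructor
      · intro h
        have h2 := Submodule.add_mem _ h huv
        simpa [sub_add_sub_cancel] using h2
      · intro h
        have h2 := Submodule.sub_mem _ h huv
        simpa [sub_sub_sub_cancel_right] using h2
    have key : ∀ a b : Fin n, (∃ u v : Fin n, X a - X b = Pi.single u 1 - Pi.single v 1) →
        ∑ i ∈ P, X a i = ∑ i ∈ P, X b i := by
      rintro a b ⟨u, v, he⟩
      have hL2 : (Pi.single u 1 - Pi.single v 1 : Fin n → ℤ) ∈ L := by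
        rw [← he]; exact Submodule.sub_mem _ (hXL a) (hXL b)
      have hiff' := hiff u v hL2
      have h0 : ∑ i ∈ P, X a i - ∑ i ∈ P, X b i
          = (if u ∈ P then (1 : ℤ) else 0) - (if v ∈ P then 1 else 0) := by
        rw [← Finset.sum_sub_distrib]
        have hptw : ∀ i, X a i - X b i = (if i = u then (1 : ℤ) else 0) - (if i = v then 1 else 0) := by
          intro i
          have hci := congrFun he i
          simpa [Pi.single_apply] using hci
        rw [Finset.sum_congr rfl fun i _ => hptw i, Finset.sum_sub_distrib,
          Finset.sum_ite_eq' P u, Finset.sum_ite_eq' P v]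
      by_cases hu : u ∈ P
      · have hv := hiff'.mp hu
        rw [if_pos hu, if_pos hv] at h0; omega
      · have hv : v ∉ P := fun hv => hu (hiff'.mpr hv)
        rw [if_neg hu, if_neg hv] at h0; omega
    have hFadj : ∀ a b, (Ggraph X).Adj a b → ∑ i ∈ P, X a i = ∑ i ∈ P, X b i := by
      intro a b hab
      simp only [Ggraph, SimpleGraph.fromRel_adj] at hab
      obtain ⟨-, h | h⟩ := hab
      · obtain ⟨u, v, -, he⟩ := h; exact key a b ⟨u, v, he⟩
      · obtain ⟨u, v, -, he⟩ := h; exact (key b a ⟨u, v, he⟩).symm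
    have hwalk : ∀ a b : Fin n, (Ggraph X).Walk a b → ∑ i ∈ P, X a i = ∑ i ∈ P, X b i := by
      intro a b w
      induction w with
      | nil => rfl
      | cons h p ih => exact (hFadj _ _ h).trans ih
    have hconst : ∀ a, ∑ i ∈ P, X a i = ∑ i ∈ P, X ⟨0, hn⟩ i := fun a =>
      (hG.preconnected a ⟨0, hn⟩).elim fun w => hwalk _ _ w
    set mm : ℤ := ∑ i ∈ P, X ⟨0, hn⟩ i with hmmdef
    have hall : ∀ a, ∑ i, (X a i : ℚ) * ((r : ℚ) * (if i ∈ P then 1 else 0) - (mm : ℚ)) = 0 := by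
      intro a
      have hsplit : ∀ i : Fin n, (X a i : ℚ) * ((r : ℚ) * (if i ∈ P then 1 else 0) - (mm : ℚ))
          = (r : ℚ) * (if i ∈ P then (X a i : ℚ) else 0) - (mm : ℚ) * (X a i : ℚ) := by
        intro i
        by_cases h : i ∈ P <;> simp [h] <;> ring
      rw [Finset.sum_congr rfl fun i _ => hsplit i, Finset.sum_sub_distrib, ← Finset.mul_sum,
        ← Finset.mul_sum]
      have h1 : ∑ i, (if i ∈ P then (X a i : ℚ) else 0) = ((∑ i ∈ P, X a i : ℤ) : ℚ) := by
        rw [Finset.sum_ite_mem, Finset.univ_inter]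
        push_cast
        rfl
      have h2 : ∑ i, (X a i : ℚ) = ((∑ i, X a i : ℤ) : ℚ) := by push_cast; rfl
      rw [h1, h2, hconst a, hsum a]
      push_cast
      ring
    have hw0 : (fun i : Fin n => (r : ℚ) * (if i ∈ P then 1 else 0) - (mm : ℚ)) = 0 :=
      hweq _ hall
    have h1 := congrFun hw0 s
    have h2 := congrFun hw0 t
    simp only [Pi.zero_apply, if_pos hsP] at h1
    by_cases htP : t ∈ P
    · exact (Finset.mem_filter.mp htP).2
    · exfalso
      simp only [Pi.zero_apply, if_neg htP] at h2
      rw [mul_zero, zero_sub, neg_eq_zero] at h2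
      rw [mul_one, h2, sub_zero] at h1
      exact (Nat.cast_ne_zero.mpr hr.ne') h1
  -- now the determinant computation
  obtain ⟨m, rfl⟩ : ∃ m, n = m + 1 := ⟨n - 1, by omega⟩
  set ρ : Fin (m + 1) → Fin (m + 1) → ℤ := fun j =>
    if h : (j : ℕ) + 1 < m + 1 then Pi.single j 1 - Pi.single ⟨(j : ℕ) + 1, h⟩ 1
    else X ⟨0, hn⟩ with hρdef
  have hρ : ∀ (j : Fin (m + 1)) (h : (j : ℕ) + 1 < m + 1),
      ρ j = Pi.single j 1 - Pi.single ⟨(j : ℕ) + 1, h⟩ 1 := by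
    intro j h
    simp only [hρdef]
    rw [dif_pos h]
  have hρlast : ρ (Fin.last m) = X ⟨0, hn⟩ := by
    simp only [hρdef]
    rw [dif_neg (by simp)]
  have hρL : ∀ j, ρ j ∈ L := by
    intro j
    by_cases h : (j : ℕ) + 1 < m + 1
    · rw [hρ j h]; exact rootL _ _
    · simp only [hρdef]; rw [dif_neg h]; exact hXL _
  have hXspan : ∀ a, X a ∈ Submodule.span ℤ (Set.range ρ) := by
    intro a
    have h1 : X a - X ⟨0, hn⟩ ∈ Submodule.span ℤ (Set.range ρ) := by
      refine aux_sumzero_mem ρ hρ _ ?_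
      simp [Finset.sum_sub_distrib, hsum]
    have h2 : X ⟨0, hn⟩ ∈ Submodule.span ℤ (Set.range ρ) :=
      hρlast ▸ Submodule.subset_span ⟨_, rfl⟩
    simpa [sub_add_cancel] using Submodule.add_mem _ h1 h2
  have hUex : ∀ a, ∃ c : Fin (m + 1) → ℤ, ∑ j, c j • ρ j = X a := fun a =>
    (Submodule.mem_span_range_iff_exists_fun ℤ).mp (hXspan a)
  choose U hU using hUex
  have hVex : ∀ j, ∃ c : Fin (m + 1) → ℤ, ∑ b, c b • X b = ρ j := fun j =>
    (Submodule.mem_span_range_iff_exists_fun ℤ).mp (hρL j)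
  choose V hV using hVex
  set Xm : Matrix (Fin (m + 1)) (Fin (m + 1)) ℤ := Matrix.of X with hXmdef
  set Ym : Matrix (Fin (m + 1)) (Fin (m + 1)) ℤ := Matrix.of ρ with hYmdef
  have hXY : Xm = Matrix.of U * Ym := by
    ext a i
    have h1 := congrFun (hU a) i
    simp only [Finset.sum_apply, Pi.smul_apply, smul_eq_mul] at h1
    simpa [hXmdef, hYmdef, Matrix.mul_apply] using h1.symm
  have hYX : Ym = Matrix.of V * Xm := by
    ext j i
    have h1 := congrFun (hV j) i
    simp only [Finset.sum_apply, Pi.smul_apply, smul_eq_mul] at h1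
    simpa [hXmdef, hYmdef, Matrix.mul_apply] using h1.symm
  have hdXne : Xm.det ≠ 0 := by
    intro h0
    have hQdet2 : Q.det = ((Xm.det : ℤ) : ℚ) := (RingHom.map_det (Int.castRingHom ℚ) Xm).symm
    have hdet : IsUnit Q.det := (Matrix.isUnit_iff_isUnit_det Q).mp hQ
    rw [hQdet2, h0] at hdet
    norm_num at hdet
  have hdet1 : Xm.det = (Matrix.of U).det * Ym.det := by rw [hXY, Matrix.det_mul]
  have hdet2 : Ym.det = (Matrix.of V).det * Xm.det := by rw [hYX, Matrix.det_mul]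
  have huv : (Matrix.of U).det * (Matrix.of V).det = 1 := by
    have h1 : Xm.det * ((Matrix.of U).det * (Matrix.of V).det) = Xm.det * 1 := by
      rw [mul_one]
      calc Xm.det * ((Matrix.of U).det * (Matrix.of V).det)
          = (Matrix.of U).det * ((Matrix.of V).det * Xm.det) := by ring
        _ = (Matrix.of U).det * Ym.det := by rw [← hdet2]
        _ = Xm.det := hdet1.symm
    exact mul_left_cancel₀ hdXne h1
  have hUnat : (Matrix.of U).det.natAbs = 1 :=
    Int.natAbs_of_isUnit (IsUnit.of_mul_eq_one _ huv)
  -- determinant of `Ym` via triangularization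
  set T : Matrix (Fin (m + 1)) (Fin (m + 1)) ℤ :=
    Matrix.of (fun j k : Fin (m + 1) => if k ≤ j then (1 : ℤ) else 0) with hTdef
  have hTdet : T.det = 1 := by
    rw [Matrix.det_of_lowerTriangular T (fun i j hij => ?_)]
    · simp [hTdef]
    · simp only [OrderDual.toDual_lt_toDual] at hij
      simp only [hTdef, Matrix.of_apply]
      rw [if_neg (not_le.mpr hij)]
  have hMrow1 : ∀ (i : Fin (m + 1)) (h : (i : ℕ) + 1 < m + 1) (k : Fin (m + 1)),
      (Ym * T) i k = if k = (⟨(i : ℕ) + 1, h⟩ : Fin (m + 1)) then -1 else 0 := by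
    intro i h k
    have keyb : ∀ b : Fin (m + 1),
        ∑ j, (if j = b then (1 : ℤ) else 0) * (if k ≤ j then 1 else 0)
          = if k ≤ b then 1 else 0 := by
      intro b
      rw [Finset.sum_congr rfl (fun j _ => boole_mul _ _), Finset.sum_ite_eq' Finset.univ b]
      simp
    have hstep : (Ym * T) i k
        = (if k ≤ i then (1 : ℤ) else 0) - (if k ≤ (⟨(i : ℕ) + 1, h⟩ : Fin (m + 1)) then 1 else 0) := by
      rw [Matrix.mul_apply]
      have hterm : ∀ j, Ym i j * T j k
          = (if j = i then (1 : ℤ) else 0) * (if k ≤ j then 1 else 0)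
            - (if j = (⟨(i : ℕ) + 1, h⟩ : Fin (m + 1)) then (1 : ℤ) else 0) * (if k ≤ j then 1 else 0) := by
        intro j
        simp only [hYmdef, hTdef, Matrix.of_apply, hρ i h, Pi.sub_apply, Pi.single_apply]
        ring
      rw [Finset.sum_congr rfl fun j _ => hterm j, Finset.sum_sub_distrib, keyb, keyb]
    rw [hstep]
    have hik : ((⟨(i : ℕ) + 1, h⟩ : Fin (m + 1)) : ℕ) = (i : ℕ) + 1 := rfl
    simp only [Fin.le_def, Fin.ext_iff, hik]
    split_ifs <;> omega
  have hMlast : (Ym * T) (Fin.last m) 0 = (r : ℤ) := by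
    rw [Matrix.mul_apply]
    have hterm : ∀ j, Ym (Fin.last m) j * T j 0 = X ⟨0, hn⟩ j := by
      intro j
      simp [hYmdef, hTdef, hρlast, Fin.zero_le j]
    rw [Finset.sum_congr rfl fun j _ => hterm j, hsum]
  have hsub : (Ym * T).submatrix (Fin.last m).succAbove Fin.succ
      = -(1 : Matrix (Fin m) (Fin m) ℤ) := by
    ext i j
    have hcs : ((Fin.castSucc i : Fin (m + 1)) : ℕ) + 1 < m + 1 := by
      simp only [Fin.coe_castSucc, add_lt_add_iff_right]
      exact i.isLt
    rw [Fin.succAbove_last, Matrix.submatrix_apply, hMrow1 _ hcs]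
    by_cases hij : i = j
    · subst hij
      rw [if_pos (Fin.ext (by simp))]
      simp
    · rw [if_neg (fun hcon => hij (Fin.ext (by
        have := congrArg Fin.val hcon
        simp only [Fin.val_succ] at this
        simpa using this.symm)))]
      simp [Matrix.one_apply, hij]
  have hdetM : (Ym * T).det = (r : ℤ) := by
    rw [Matrix.det_succ_column_zero]
    rw [Finset.sum_eq_single (Fin.last m) ?h1 ?h2]
    case h1 =>
      intro i _ hine
      have hilt : (i : ℕ) + 1 < m + 1 := by
        have := Fin.val_lt_last hine
        omega
      rw [hMrow1 i hilt 0, if_neg (fun hcon => by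
        have := congrArg Fin.val hcon
        simp at this)]
      ring
    case h2 => intro hcon; exact absurd (Finset.mem_univ _) hcon
    rw [hMlast, hsub, Matrix.det_neg, Matrix.det_one, Fin.val_last, Fintype.card_fin]
    have hsq : ((-1 : ℤ) ^ m) * ((-1 : ℤ) ^ m) = 1 := by
      rw [← pow_add]
      exact Even.neg_one_pow ⟨m, rfl⟩
    linear_combination (r : ℤ) * hsq
  have hdetY : Ym.det = (r : ℤ) := by
    have h1 : Ym.det * T.det = (Ym * T).det := (Matrix.det_mul _ _).symm
    rw [hTdet, mul_one] at h1
    rw [h1, hdetM]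
  have hfinal : Xm.det.natAbs = (Matrix.of U).det.natAbs * Ym.det.natAbs := by
    rw [hdet1, Int.natAbs_mul]
  show Xm.det.natAbs = r
  rw [hfinal, hUnat, one_mul, hdetY, Int.natAbs_natCast]
end

section
/- Let M be a connected matroid of rank r on the ground set {1,…,n}, let B_1, …, B_n be bases of M, let X = (X_1, …, X_n) be the list of their incidence vectors X_a = e_{B_a} ∈ ℤ^n, and suppose X_1, …, X_n are linearly independent (over ℚ). If the graph G(X) is connected, then the graph g(X) is connected. -/
/-- An auxiliary linear functional `v ↦ ∑ i, f i * v i` on `ℚ^n`. -/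
noncomputable def weightFunctional {n : ℕ} (f : Fin n → ℚ) : (Fin n → ℚ) →ₗ[ℚ] ℚ where
  toFun v := ∑ i, f i * v i
  map_add' v w := by
    simp [mul_add, Finset.sum_add_distrib]
  map_smul' q v := by
    simp only [Finset.mul_sum, smul_eq_mul, RingHom.id_apply]
    exact Finset.sum_congr rfl fun i _ => by rw [Pi.smul_apply, smul_eq_mul]; ring

lemma weightFunctional_single {n : ℕ} (f : Fin n → ℚ) (u : Fin n) :
    weightFunctional f (Pi.single u 1) = f u := by
  simp [weightFunctional, Pi.single_apply, mul_ite]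

/-- If `M` is a connected matroid of rank `r` on `{1,…,n}`,
`X = (X_1,…,X_n)` is a linearly independent (over `ℚ`) list of incidence vectors of bases of
`M`, and the graph `G(X)` is connected, then the graph `g(X)` is connected. -/
theorem ggraph_connected_of_Ggraph_connected (n r : ℕ)
    (M : Matroid (Fin n)) (hE : M.E = Set.univ)
    (hrank : ∀ B : Set (Fin n), M.IsBase B → B.ncard = r)
    (hconn : M.ConnectedMatroid)
    (B : Fin n → Set (Fin n)) (hB : ∀ a : Fin n, M.IsBase (B a))
    (hli : LinearIndependent ℚ fun a : Fin n => fun i : Fin n => (incVec (B a) i : ℚ))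
    (hG : (Ggraph fun a => incVec (B a)).Connected) :
    (ggraph fun a => incVec (B a)).Connected := by
  classical
  have hne : Nonempty (Fin n) := hG.nonempty
  set X : Fin n → Fin n → ℤ := fun a => incVec (B a) with hXdef
  set Xq : Fin n → Fin n → ℚ := fun a i => ((X a i : ℤ) : ℚ) with hXqdef
  -- r ≠ 0
  have hr0 : (r : ℚ) ≠ 0 := by
    intro h
    have hr : r = 0 := by exact_mod_cast h
    obtain ⟨a⟩ := hne
    have hb : (B a).ncard = 0 := hr ▸ hrank _ (hB a)
    have hBa : B a = ∅ := by
      rw [Set.ncard_eq_zero (Set.toFinite _)] at hb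
      exact hb
    exact hli.ne_zero a (by funext i; simp [hXqdef, hXdef, incVec, hBa])
  -- coordinate sums are r
  have hsum : ∀ a : Fin n, (∑ i, Xq a i) = (r : ℚ) := by
    intro a
    have h1 : (∑ i, Xq a i) = ((B a).toFinset.card : ℚ) := by
      rw [hXqdef]
      simp only [hXdef, incVec, Set.indicator_apply]
      rw [Finset.card_eq_sum_ones]
      push_cast
      rw [Finset.sum_congr rfl (fun i _ => rfl)]
      simp [Set.mem_toFinset, Finset.sum_ite_mem, Finset.sum_boole]
    rw [h1]
    have : (B a).toFinset.card = (B a).ncard := (Set.ncard_eq_toFinset_card' _).symm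
    rw [this, hrank _ (hB a)]
  -- span of Xq is everything
  have hspan : Submodule.span ℚ (Set.range Xq) = ⊤ := by
    apply hli.span_eq_top_of_card_eq_finrank
    simp
  -- Show preconnectedness of ggraph X
  refine ⟨fun s t => ?_⟩
  by_contra hst
  set g := ggraph X with hgdef
  set f : Fin n → ℚ := fun i => if g.Reachable s i then 1 else 0 with hfdef
  set L := weightFunctional f with hLdef
  -- L is constant across Ggraph edges
  have hstep : ∀ a b : Fin n, (Ggraph X).Adj a b → L (Xq a) = L (Xq b) := by
    intro a b hab
    rw [Ggraph, SimpleGraph.fromRel_adj] at hab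
    have key : ∀ a' b' : Fin n, (∃ s' t' : Fin n, s' ≠ t' ∧
        X a' - X b' = Pi.single s' 1 - Pi.single t' 1) → L (Xq a') = L (Xq b') := by
      intro a' b' ⟨s', t', hst', heq⟩
      have hgadj : g.Adj s' t' := by
        rw [hgdef, ggraph, SimpleGraph.fromRel_adj]
        exact ⟨hst', Or.inl ⟨a', b', heq⟩⟩
      have hf : f s' = f t' := by
        rw [hfdef]
        simp only
        congr 1
        exact propext ⟨fun h => h.trans hgadj.reachable, fun h => h.trans hgadj.symm.reachable⟩
      have heqq : Xq a' - Xq b' = Pi.single s' 1 - Pi.single t' 1 := by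
        funext i
        have := congrFun heq i
        simp only [Pi.sub_apply] at this ⊢
        rw [hXqdef]
        simp only
        rw [← Int.cast_sub, this]
        by_cases h1 : i = s' <;> by_cases h2 : i = t' <;>
          simp [Pi.single_apply, h1, h2]
      have : L (Xq a') - L (Xq b') = 0 := by
        rw [← map_sub, heqq, map_sub, hLdef, weightFunctional_single,
          weightFunctional_single, hf, sub_self]
      linarith
    rcases hab.2 with h | h
    · exact key a b h
    · exact (key b a h).symm
  -- L is constant on all Xq a
  have hwalk : ∀ a b : Fin n, (Ggraph X).Walk a b → L (Xq a) = L (Xq b) := by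
    intro a b p
    induction p with
    | nil => rfl
    | cons h _ ih => exact (hstep _ _ h).trans ih
  obtain ⟨a0⟩ := hne
  set c := L (Xq a0) with hcdef
  have hconst : ∀ a : Fin n, L (Xq a) = c := by
    intro a
    obtain ⟨p⟩ := hG.preconnected a a0
    exact hwalk a a0 p
  -- the all-ones functional
  set S := weightFunctional (fun _ : Fin n => (1 : ℚ)) with hSdef
  have hSX : ∀ a : Fin n, S (Xq a) = (r : ℚ) := by
    intro a
    rw [hSdef]
    show (∑ i, 1 * Xq a i) = (r : ℚ)
    simp only [one_mul]
    exact hsum a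
  -- D := r • L - c • S vanishes on a spanning set, hence everywhere
  set D := (r : ℚ) • L - c • S with hDdef
  have hDzero : ∀ v, D v = 0 := by
    have hle : Submodule.span ℚ (Set.range Xq) ≤ LinearMap.ker D := by
      rw [Submodule.span_le]
      rintro _ ⟨a, rfl⟩
      simp only [SetLike.mem_coe, LinearMap.mem_ker, hDdef, LinearMap.sub_apply,
        LinearMap.smul_apply, smul_eq_mul, hconst a, hSX a]
      ring
    rw [hspan] at hle
    intro v
    exact (LinearMap.mem_ker).mp (hle Submodule.mem_top)
  -- evaluate D on single vectors
  have hfu : ∀ u : Fin n, (r : ℚ) * f u = c := by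
    intro u
    have := hDzero (Pi.single u 1)
    simp only [hDdef, LinearMap.sub_apply, LinearMap.smul_apply, smul_eq_mul, hLdef, hSdef,
      weightFunctional_single] at this
    linarith
  have h1 := hfu s
  have h2 := hfu t
  rw [show f s = 1 by simp only [hfdef]; exact if_pos (SimpleGraph.Reachable.refl s)] at h1
  rw [show f t = 0 by simp [hfdef, hst]] at h2
  simp only [mul_one, mul_zero] at h1 h2
  exact hr0 (by linarith)
end
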